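/- arXiv:2503.21849 — 3 statements merged into one kernel-verified Lean document; each statement's English description precedes it below -/
import Mathlib

section
/- Fix γ ∈ (0,1) and μ > 0 with μ ≠ 1, and set k := ⌊1/μ⌋ and γ_c(μ) := (k/(k+1))·(1 − μ/(2 − kμ)). Let g be the concave traveling wave with speed v and support [L,0], and let A(x) and A⁺(x) denote respectively the smallest and the largest maximizer over y ∈ ℝ of y ↦ g(y) − |x + v − y|. Then A and A⁺ are non-decreasing functions on [L,0]. Moreover, for every x ∈ [L,0]: if γ ≤ γ_c(μ), then there exists J ∈ ℕ such that the j-fold iterates satisfy A^j(x) = (A⁺)^j(x) = 0 for all j ≥ J; and if γ > γ_c(μ), then there exists a constant c₁ > 0 such that for all sufficiently large j, A^j(x) = −c₁ and (A⁺)^j(x) = 0. -/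
/-- `π(x) = x` if `x ≥ 0`, and `−∞` otherwise. -/
noncomputable def piE (x : EReal) : EReal := if 0 ≤ x then x else ⊥

/-- Concavity for `ℝ ∪ {−∞}`-valued functions (modeled as `ℝ → EReal`). -/
def ConcaveE (h : ℝ → EReal) : Prop :=
  ∀ x x' t : ℝ, 0 ≤ t → t ≤ 1 →
    ((t : EReal) * h x + ((1 - t : ℝ) : EReal) * h x') ≤ h (t * x + (1 - t) * x')

/-- `Φ_ξ[g](x) = 1 − γ + sup_y ( g(y) − |x − y| ) − μ·max(ξ − x, 0)`. -/
noncomputable def Phi (γ μ : ℝ) (g : ℝ → EReal) (ξ x : ℝ) : EReal :=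
  ((1 - γ : ℝ) : EReal) + (⨆ y : ℝ, g y - ((|x - y| : ℝ) : EReal))
    - ((μ * max (ξ - x) 0 : ℝ) : EReal)

/-- The phenotypic threshold `s = sup{ ξ ∈ ℝ : sup_x Φ_ξ[g](x) ≥ γ }`. -/
noncomputable def sNext (γ μ : ℝ) (g : ℝ → EReal) : ℝ :=
  sSup {ξ : ℝ | (γ : EReal) ≤ ⨆ x : ℝ, Phi γ μ g ξ x}

/-- The deterministic dynamic: `g_n = π ∘ Φ_{s_n}[g_{n−1}]` with
`s_n = sNext γ μ g_{n−1}`. -/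
noncomputable def gIter (γ μ : ℝ) (g0 : ℝ → EReal) : ℕ → ℝ → EReal
  | 0 => g0
  | n + 1 => fun x =>
      piE (Phi γ μ (gIter γ μ g0 n) (sNext γ μ (gIter γ μ g0 n)) x)

/-- A concave `g` with `sup{x : g x > 0} = 0`, `L = inf{x : g x > 0} > −∞`
(and `g = −∞` outside `[L,0]`) is a traveling wave with speed `v` if the
dynamic has the effect of shifting `g` by `v` at every step. -/
def IsTravelingWave (γ μ : ℝ) (g : ℝ → EReal) (v L : ℝ) : Prop :=
  ConcaveE g ∧
  {x : ℝ | 0 < g x}.Nonempty ∧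
  BddBelow {x : ℝ | 0 < g x} ∧
  sSup {x : ℝ | 0 < g x} = 0 ∧
  sInf {x : ℝ | 0 < g x} = L ∧
  (∀ x : ℝ, x ∉ Set.Icc L 0 → g x = ⊥) ∧
  (∀ n : ℕ, 1 ≤ n → ∀ x : ℝ, gIter γ μ g n x = g (x - n * v))

/-- `k = ⌊1/μ⌋`. -/
noncomputable def kFl (μ : ℝ) : ℤ := ⌊1 / μ⌋

/-- The critical selection strength `γ_c(μ) = (k/(k+1))·(1 − μ/(2 − kμ))`. -/
noncomputable def gammaC (μ : ℝ) : ℝ :=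
  ((kFl μ : ℝ) / ((kFl μ : ℝ) + 1)) * (1 - μ / (2 - (kFl μ : ℝ) * μ))

namespace Anc

lemma piE_coe_of_nonneg {r : ℝ} (h : 0 ≤ r) : piE (r : EReal) = (r : EReal) := by
  unfold piE; rw [if_pos]; exact_mod_cast h

lemma piE_coe_of_neg {r : ℝ} (h : r < 0) : piE (r : EReal) = ⊥ := by
  unfold piE; rw [if_neg]; intro hc; exact absurd (by exact_mod_cast hc) (not_le.2 h)

lemma piE_top : piE ⊤ = ⊤ := if_pos le_top

lemma coe_arith (a b c : ℝ) : ((a + b - c : ℝ) : EReal) = (a:EReal) + (b:EReal) - (c:EReal) := by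
  rw [show (a + b - c : ℝ) = (a + b) - c by ring, EReal.coe_sub, EReal.coe_add]

lemma piE_coe_cases (r : ℝ) : piE (r:EReal) = (r:EReal) ∧ 0 ≤ r ∨ piE (r:EReal) = ⊥ ∧ r < 0 := by
  rcases le_or_gt 0 r with h | h
  · exact Or.inl ⟨piE_coe_of_nonneg h, h⟩
  · exact Or.inr ⟨piE_coe_of_neg h, h⟩

/-- The bundled context of real-level facts extracted from a traveling wave. -/
structure Ctx (γ μ : ℝ) (g : ℝ → EReal) (v L : ℝ) (h : ℝ → ℝ) (s : ℝ) : Prop where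
  hγ0 : 0 < γ
  hγ1 : γ < 1
  hμ : 0 < μ
  conc : ConcaveE g
  hne : {x : ℝ | 0 < g x}.Nonempty
  hbdd : BddBelow {x : ℝ | 0 < g x}
  hSup : sSup {x : ℝ | 0 < g x} = 0
  hInf : sInf {x : ℝ | 0 < g x} = L
  hbot : ∀ x : ℝ, x ∉ Set.Icc L 0 → g x = ⊥
  hs : s = sNext γ μ g
  hIter : ∀ n : ℕ, 1 ≤ n → ∀ x : ℝ, gIter γ μ g n x = g (x - n * v)
  coe_h : ∀ x : ℝ, (⨆ y : ℝ, g y - ((|x - y| : ℝ) : EReal)) = ((h x : ℝ) : EReal)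
  wave : ∀ y : ℝ, g y = piE (((1 - γ + h (y + v) - μ * max (s - (y + v)) 0 : ℝ)) : EReal)

variable {γ μ v L s : ℝ} {g : ℝ → EReal} {h : ℝ → ℝ}

lemma mkCtx (hγ : γ ∈ Set.Ioo (0:ℝ) 1) (hμ : 0 < μ) (hg : IsTravelingWave γ μ g v L) :
    ∃ h s, Ctx γ μ g v L h s := by
  obtain ⟨conc, hne, hbdd, hSup, hInf, hbot, hwave⟩ := hg
  -- L ≤ 0 : needed to know 1 ∉ Icc L 0
  obtain ⟨y₀, hy₀⟩ := id hne
  have hy₀Icc : y₀ ∈ Set.Icc L 0 := by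
    by_contra hc
    have : g y₀ = ⊥ := hbot y₀ hc
    rw [Set.mem_setOf_eq, this] at hy₀
    exact absurd hy₀ (by simp)
  have hL0 : L ≤ 0 := le_trans hy₀Icc.1 hy₀Icc.2
  -- the n = 1 wave equation
  have wave1 : ∀ x : ℝ, piE (Phi γ μ g (sNext γ μ g) x) = g (x - v) := by
    intro x
    have := hwave 1 le_rfl x
    simpa [gIter] using this
  -- g never takes value ⊤
  have g_ne_top : ∀ y, g y ≠ ⊤ := by
    intro y hy
    have hsup : ∀ x : ℝ, (⨆ z : ℝ, g z - ((|x - z| : ℝ) : EReal)) = ⊤ := by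
      intro x
      refine top_le_iff.1 ?_
      refine le_trans ?_ (le_iSup (fun z => g z - ((|x - z| : ℝ) : EReal)) y)
      rw [hy]
      rw [EReal.top_sub_coe]
    have hPhi : ∀ x, Phi γ μ g (sNext γ μ g) x = ⊤ := by
      intro x
      unfold Phi
      rw [hsup x]
      rw [EReal.coe_add_top, EReal.top_sub_coe]
    have h1 : g (v + 1 - v) = ⊤ := by
      rw [← wave1 (v + 1), hPhi, piE_top]
    have : g 1 = ⊤ := by simpa using h1
    have : g 1 = ⊥ := hbot 1 (by
      intro hc
      exact absurd hc.2 (by norm_num))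
    simp_all
  -- the iSup is never ⊤
  have isup_ne_top : ∀ x : ℝ, (⨆ z : ℝ, g z - ((|x - z| : ℝ) : EReal)) ≠ ⊤ := by
    intro x hx
    have hPhi : Phi γ μ g (sNext γ μ g) x = ⊤ := by
      unfold Phi; rw [hx, EReal.coe_add_top, EReal.top_sub_coe]
    have := wave1 x
    rw [hPhi, piE_top] at this
    exact g_ne_top _ this.symm
  -- the iSup is never ⊥
  obtain ⟨r₀, hr₀⟩ : ∃ r₀ : ℝ, g y₀ = (r₀ : EReal) := by
    lift g y₀ to ℝ using ⟨g_ne_top y₀, ne_bot_of_gt hy₀⟩ with r₀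
    exact ⟨r₀, rfl⟩
  have isup_ne_bot : ∀ x : ℝ, (⨆ z : ℝ, g z - ((|x - z| : ℝ) : EReal)) ≠ ⊥ := by
    intro x hx
    have : g y₀ - ((|x - y₀| : ℝ) : EReal) ≤ ⊥ := hx ▸ le_iSup (fun z => g z - ((|x - z| : ℝ) : EReal)) y₀
    rw [hr₀, ← EReal.coe_sub] at this
    exact EReal.coe_ne_bot _ (le_bot_iff.1 this)
  set h : ℝ → ℝ := fun x => (⨆ z : ℝ, g z - ((|x - z| : ℝ) : EReal)).toReal with hh
  have coe_h : ∀ x : ℝ, (⨆ z : ℝ, g z - ((|x - z| : ℝ) : EReal)) = ((h x : ℝ) : EReal) :=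
    fun x => (EReal.coe_toReal (isup_ne_top x) (isup_ne_bot x)).symm
  refine ⟨h, sNext γ μ g, hγ.1, hγ.2, hμ, conc, hne, hbdd, hSup, hInf, hbot, rfl, hwave, coe_h, ?_⟩
  intro y
  have w := wave1 (y + v)
  rw [show y + v - v = y by ring] at w
  rw [← w]
  congr 1
  unfold Phi
  rw [coe_h (y + v), coe_arith]

end Anc


namespace Anc

/-- the real fitness profile -/
noncomputable def phi (γ μ : ℝ) (h : ℝ → ℝ) (s : ℝ) (x : ℝ) : ℝ :=
  1 - γ + h x - μ * max (s - x) 0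

variable {γ μ v L s : ℝ} {g : ℝ → EReal} {h : ℝ → ℝ}

lemma Ctx.wave' (c : Ctx γ μ g v L h s) (y : ℝ) :
    g y = piE ((phi γ μ h s (y + v) : ℝ) : EReal) := c.wave y

lemma Ctx.mem_Icc_of_pos (c : Ctx γ μ g v L h s) {y : ℝ} (hy : 0 < g y) :
    y ∈ Set.Icc L 0 := by
  by_contra hc
  rw [c.hbot y hc] at hy
  exact absurd hy (by simp)

lemma Ctx.hL0 (c : Ctx γ μ g v L h s) : L ≤ 0 := by
  obtain ⟨y₀, hy₀⟩ := c.hne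
  have := c.mem_Icc_of_pos hy₀
  linarith [this.1, this.2]

lemma Ctx.h_ge (c : Ctx γ μ g v L h s) {y r : ℝ} (x : ℝ) (hr : g y = (r : EReal)) :
    r - |x - y| ≤ h x := by
  have h1 : g y - ((|x - y| : ℝ) : EReal) ≤ ((h x : ℝ) : EReal) := by
    rw [← c.coe_h x]
    exact le_iSup (fun z => g z - ((|x - z| : ℝ) : EReal)) y
  rw [hr, ← EReal.coe_sub] at h1
  exact_mod_cast h1

lemma Ctx.h_le_bound (c : Ctx γ μ g v L h s) {x B : ℝ}
    (hb : ∀ y : ℝ, g y - ((|x - y| : ℝ) : EReal) ≤ ((B : ℝ) : EReal)) : h x ≤ B := by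
  have h1 : ((h x : ℝ) : EReal) ≤ ((B : ℝ) : EReal) := by
    rw [← c.coe_h x]; exact iSup_le hb
  exact_mod_cast h1

lemma Ctx.hlip (c : Ctx γ μ g v L h s) (x x' : ℝ) : h x' ≤ h x + |x' - x| := by
  refine c.h_le_bound (fun y => ?_)
  by_cases hy : g y = ⊥
  · rw [hy]; simp
  · have hyt : g y ≠ ⊤ := by
      intro ht
      have h1 : g y - ((|x - y| : ℝ) : EReal) ≤ ((h x : ℝ) : EReal) := by
        rw [← c.coe_h x]; exact le_iSup (fun z => g z - ((|x - z| : ℝ) : EReal)) y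
      rw [ht, EReal.top_sub_coe] at h1
      exact absurd h1 (by simp)
    lift g y to ℝ using ⟨hyt, hy⟩ with r hr
    have h2 : r - |x - y| ≤ h x := c.h_ge x hr.symm
    have h3 : r - |x' - y| ≤ h x + |x' - x| := by
      have he : x - y = (x' - y) + (x - x') := by ring
      have : |x - y| ≤ |x' - y| + |x' - x| := by
        rw [he]
        refine le_trans (abs_add_le _ _) ?_
        rw [abs_sub_comm x x']
      linarith
    rw [← EReal.coe_sub]
    exact_mod_cast h3

/-- the fundamental slope bound: φ has slope ≥ −1 -/
lemma Ctx.phi_slope (c : Ctx γ μ g v L h s) {x x' : ℝ} (hxx : x ≤ x') :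
    phi γ μ h s x - (x' - x) ≤ phi γ μ h s x' := by
  have h1 : h x ≤ h x' + |x - x'| := c.hlip x' x
  have h2 : max (s - x') 0 ≤ max (s - x) 0 := by
    apply max_le_max _ le_rfl; linarith
  have h3 : |x - x'| = x' - x := by rw [abs_sub_comm]; exact abs_of_nonneg (by linarith)
  rw [h3] at h1
  have h2' : μ * max (s - x') 0 ≤ μ * max (s - x) 0 := mul_le_mul_of_nonneg_left h2 c.hμ.le
  unfold phi
  linarith

/-- strict slope bound where the penalty is active -/
lemma Ctx.phi_slope_mu (c : Ctx γ μ g v L h s) {x x' : ℝ} (hxx : x ≤ x') (hx' : x' ≤ s) :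
    phi γ μ h s x + (μ - 1) * (x' - x) ≤ phi γ μ h s x' := by
  have h1 : h x ≤ h x' + |x - x'| := c.hlip x' x
  have h3 : |x - x'| = x' - x := by rw [abs_sub_comm]; exact abs_of_nonneg (by linarith)
  have h4 : max (s - x) 0 = s - x := max_eq_left (by linarith)
  have h5 : max (s - x') 0 = s - x' := max_eq_left (by linarith)
  rw [h3] at h1
  unfold phi
  rw [h4, h5]
  linarith

lemma Ctx.phi_lip (c : Ctx γ μ g v L h s) (x x' : ℝ) :
    phi γ μ h s x' ≤ phi γ μ h s x + (1 + μ) * |x' - x| := by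
  have h1 : h x' ≤ h x + |x' - x| := c.hlip x x'
  have h2 : max (s - x) 0 ≤ max (s - x') 0 + |x' - x| := by
    rcases le_total (s - x) 0 with hc | hc
    · simp [max_eq_right hc]
      positivity
    · rw [max_eq_left hc]
      rcases abs_cases (x' - x) with ⟨he, _⟩ | ⟨he, _⟩ <;>
        [skip; skip] <;> rcases le_total (s - x') 0 with hd | hd <;>
        simp [max_eq_right, max_eq_left, hd] <;> linarith
  unfold phi
  nlinarith [c.hμ, abs_nonneg (x' - x)]

lemma Ctx.hLlt (c : Ctx γ μ g v L h s) : L < 0 := by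
  rcases lt_or_eq_of_le c.hL0 with hlt | heq
  · exact hlt
  -- L = 0 : support is {0}
  exfalso
  obtain ⟨y₀, hy₀⟩ := c.hne
  have hIcc := c.mem_Icc_of_pos hy₀
  have hy00 : y₀ = 0 := le_antisymm hIcc.2 (heq ▸ hIcc.1)
  subst hy00
  -- g 0 > 0 gives φ v > 0
  have hw := c.wave' 0
  rw [zero_add] at hw
  rcases piE_coe_cases (phi γ μ h s v) with ⟨he, hp⟩ | ⟨he, _⟩
  · rw [he] at hw
    have hy₀' : (0 : EReal) < g 0 := hy₀
    have hφpos : 0 < phi γ μ h s v := by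
      rw [hw] at hy₀'
      exact_mod_cast hy₀'
    have hμ1 : (0:ℝ) < 1 + μ := by linarith [c.hμ]
    set ε := phi γ μ h s v / (2 * (1 + μ)) with hε
    have hεpos : 0 < ε := div_pos hφpos (by linarith)
    have hkey : (1 + μ) * ε = phi γ μ h s v / 2 := by
      rw [hε]; field_simp
    have hφy : 0 < phi γ μ h s (-ε + v) := by
      have hl := c.phi_lip (-ε + v) v
      have habs : |v - (-ε + v)| = ε := by
        rw [show v - (-ε + v) = ε by ring]; exact abs_of_nonneg hεpos.le
      have hl2 := c.phi_lip v (-ε + v)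
      have habs2 : |(-ε + v) - v| = ε := by
        rw [show (-ε + v) - v = -ε by ring, abs_neg]; exact abs_of_nonneg hεpos.le
      rw [habs] at hl
      linarith
    have hgy : g (-ε) = ⊥ := c.hbot (-ε) (by
      intro hc
      rw [← heq] at hc
      have := hc.1
      linarith)
    have hw2 := c.wave' (-ε)
    rw [hgy, piE_coe_of_nonneg hφy.le] at hw2
    exact EReal.coe_ne_bot _ hw2.symm
  · rw [he] at hw
    have hy₀' : (0 : EReal) < g 0 := hy₀
    rw [hw] at hy₀'
    exact absurd hy₀' (by simp)

lemma Ctx.g_pos (c : Ctx γ μ g v L h s) {y : ℝ} (h1 : L < y) (h2 : y < 0) : 0 < g y := by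
  obtain ⟨x₁, hx₁S, hx₁⟩ := exists_lt_of_lt_csSup c.hne (c.hSup ▸ h2)
  obtain ⟨x₂, hx₂S, hx₂⟩ := exists_lt_of_csInf_lt c.hne (c.hInf ▸ h1)
  have hlt : x₂ < x₁ := lt_trans hx₂ hx₁
  set t := (x₁ - y) / (x₁ - x₂) with ht
  have ht0 : 0 < t := by apply div_pos <;> linarith
  have ht1 : t < 1 := by rw [div_lt_one (by linarith)]; linarith
  have hne2 : x₁ - x₂ ≠ 0 := ne_of_gt (by linarith)
  have hcomb : t * x₂ + (1 - t) * x₁ = y := by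
    rw [ht]
    field_simp
    ring
  have := c.conc x₂ x₁ t ht0.le ht1.le
  rw [hcomb] at this
  refine lt_of_lt_of_le ?_ this
  have hp1 : (0 : EReal) < (t : EReal) * g x₂ :=
    EReal.mul_pos (by exact_mod_cast ht0) hx₂S
  have hp2 : (0 : EReal) ≤ ((1 - t : ℝ) : EReal) * g x₁ :=
    le_of_lt (EReal.mul_pos (by exact_mod_cast (by linarith : (0:ℝ) < 1 - t)) hx₁S)
  calc (0 : EReal) < (t : EReal) * g x₂ := hp1
    _ = (t : EReal) * g x₂ + 0 := (add_zero _).symm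
    _ ≤ (t : EReal) * g x₂ + ((1 - t : ℝ) : EReal) * g x₁ := by
        exact add_le_add le_rfl hp2

end Anc


namespace Anc
variable {γ μ v L s : ℝ} {g : ℝ → EReal} {h : ℝ → ℝ}


lemma half_le {m e P : ℝ} (hm : 0 < m) (h2 : e ≤ P / (2 * m)) : m * e ≤ P / 2 := by
  have h3 : m * e ≤ m * (P / (2 * m)) := mul_le_mul_of_nonneg_left h2 hm.le
  have h4 : m * (P / (2 * m)) = P / 2 := by
    field_simp [hm.ne']
  linarith

lemma half_eq {m e P : ℝ} (hm : 0 < m) (he : e = P / (2 * m)) : m * e = P / 2 := by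
  rw [he]
  field_simp [hm.ne']

lemma Ctx.hμ1 (c : Ctx γ μ g v L h s) : (0:ℝ) < 1 + μ := by linarith [c.hμ]

lemma Ctx.phi_v (c : Ctx γ μ g v L h s) : phi γ μ h s v = 0 := by
  have hL := c.hLlt
  rcases lt_trichotomy (phi γ μ h s v) 0 with hlt | he | hgt
  · -- φ(v) < 0 : contradiction with interior positivity
    exfalso
    set ε := min (-L / 2) (-phi γ μ h s v / (2 * (1 + μ))) with hε
    have hε0 : 0 < ε := lt_min (by linarith) (div_pos (by linarith) (by linarith [c.hμ]))
    have hyI : L < -ε ∧ -ε < 0 := by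
      constructor
      · have : ε ≤ -L / 2 := min_le_left _ _
        linarith
      · linarith
    have hφ : phi γ μ h s (-ε + v) < 0 := by
      have hl := c.phi_lip v (-ε + v)
      have habs : |(-ε + v) - v| = ε := by
        rw [show (-ε + v) - v = -ε by ring, abs_neg]; exact abs_of_nonneg hε0.le
      rw [habs] at hl
      have h2 : ε ≤ -phi γ μ h s v / (2 * (1 + μ)) := min_le_right _ _
      have h3 : (1 + μ) * ε ≤ -phi γ μ h s v / 2 := half_le c.hμ1 h2
      linarith
    have := c.g_pos hyI.1 hyI.2
    have hw := c.wave' (-ε)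
    rw [piE_coe_of_neg hφ] at hw
    rw [hw] at this
    exact absurd this (by simp)
  · exact he
  · -- φ(v) > 0 : contradiction with g = ⊥ right of 0
    exfalso
    set ε := phi γ μ h s v / (2 * (1 + μ)) with hε
    have hε0 : 0 < ε := div_pos hgt (by linarith [c.hμ1])
    have hφ : 0 < phi γ μ h s (ε + v) := by
      have hl := c.phi_lip (ε + v) v
      have habs : |v - (ε + v)| = ε := by
        rw [show v - (ε + v) = -ε by ring, abs_neg]; exact abs_of_nonneg hε0.le
      rw [habs] at hl
      have h3 : (1 + μ) * ε = phi γ μ h s v / 2 := half_eq c.hμ1 hε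
      linarith
    have hw := c.wave' ε
    rw [piE_coe_of_nonneg hφ.le] at hw
    have hb : g ε = ⊥ := c.hbot ε (by
      intro hc
      linarith [hc.2])
    rw [hb] at hw
    exact EReal.coe_ne_bot _ hw.symm

lemma Ctx.g_zero (c : Ctx γ μ g v L h s) : g 0 = ((0:ℝ) : EReal) := by
  have hw := c.wave' 0
  rw [zero_add, piE_coe_of_nonneg c.phi_v.ge, c.phi_v] at hw
  exact hw

lemma Ctx.phi_Lv (c : Ctx γ μ g v L h s) : phi γ μ h s (L + v) = 0 := by
  have hL := c.hLlt
  rcases lt_trichotomy (phi γ μ h s (L + v)) 0 with hlt | he | hgt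
  · -- contradiction with interior positivity just right of L
    exfalso
    set ε := min (-L / 2) (-phi γ μ h s (L + v) / (2 * (1 + μ))) with hε
    have hε0 : 0 < ε := lt_min (by linarith) (div_pos (by linarith) (by linarith [c.hμ]))
    have hyI : L < L + ε ∧ L + ε < 0 := by
      constructor
      · linarith
      · have : ε ≤ -L / 2 := min_le_left _ _
        linarith
    have hφ : phi γ μ h s (L + ε + v) < 0 := by
      have hl := c.phi_lip (L + v) (L + ε + v)
      have habs : |(L + ε + v) - (L + v)| = ε := by
        rw [show (L + ε + v) - (L + v) = ε by ring]; exact abs_of_nonneg hε0.le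
      rw [habs] at hl
      have h2 : ε ≤ -phi γ μ h s (L + v) / (2 * (1 + μ)) := min_le_right _ _
      have h3 : (1 + μ) * ε ≤ -phi γ μ h s (L + v) / 2 := half_le c.hμ1 h2
      linarith
    have := c.g_pos hyI.1 hyI.2
    have hw := c.wave' (L + ε)
    rw [show L + ε + v = L + ε + v by ring, piE_coe_of_neg hφ] at hw
    rw [hw] at this
    exact absurd this (by simp)
  · exact he
  · -- contradiction with g = ⊥ left of L
    exfalso
    set ε := phi γ μ h s (L + v) / (2 * (1 + μ)) with hε
    have hε0 : 0 < ε := div_pos hgt (by linarith [c.hμ1])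
    have hφ : 0 < phi γ μ h s (L - ε + v) := by
      have hl := c.phi_lip (L - ε + v) (L + v)
      have habs : |(L + v) - (L - ε + v)| = ε := by
        rw [show (L + v) - (L - ε + v) = ε by ring]; exact abs_of_nonneg hε0.le
      rw [habs] at hl
      have h3 : (1 + μ) * ε = phi γ μ h s (L + v) / 2 := half_eq c.hμ1 hε
      linarith
    have hw := c.wave' (L - ε)
    rw [piE_coe_of_nonneg hφ.le] at hw
    have hb : g (L - ε) = ⊥ := c.hbot (L - ε) (by
      intro hc
      linarith [hc.1])
    rw [hb] at hw
    exact EReal.coe_ne_bot _ hw.symm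

lemma Ctx.g_L (c : Ctx γ μ g v L h s) : g L = ((0:ℝ) : EReal) := by
  have hw := c.wave' L
  rw [piE_coe_of_nonneg c.phi_Lv.ge, c.phi_Lv] at hw
  exact hw

/-- on the support, `g` equals the (nonnegative) real profile -/
lemma Ctx.g_eq_phi (c : Ctx γ μ g v L h s) {y : ℝ} (h1 : L ≤ y) (h2 : y ≤ 0) :
    g y = ((phi γ μ h s (y + v) : ℝ) : EReal) ∧ 0 ≤ phi γ μ h s (y + v) := by
  rcases eq_or_lt_of_le h1 with he | hlt
  · subst he
    refine ⟨by rw [c.g_L, c.phi_Lv], c.phi_Lv.ge⟩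
  rcases eq_or_lt_of_le h2 with he | hlt2
  · subst he
    refine ⟨by rw [c.g_zero, zero_add, c.phi_v], by rw [zero_add, c.phi_v]⟩
  have hpos := c.g_pos hlt hlt2
  have hw := c.wave' y
  rcases piE_coe_cases (phi γ μ h s (y + v)) with ⟨he, hp⟩ | ⟨he, hp⟩
  · rw [he] at hw; exact ⟨hw, hp⟩
  · rw [he] at hw; rw [hw] at hpos; exact absurd hpos (by simp)

/-- P2 : the map `y ↦ g(y) + y` is nondecreasing (in terms of the profile) -/
lemma Ctx.Gplus_mono (c : Ctx γ μ g v L h s) {y y' : ℝ} (hyy : y ≤ y') :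
    phi γ μ h s (y + v) + y ≤ phi γ μ h s (y' + v) + y' := by
  have := c.phi_slope (show y + v ≤ y' + v by linarith)
  linarith

/-- the profile lies below `-y` -/
lemma Ctx.phi_le_neg (c : Ctx γ μ g v L h s) {y : ℝ} (h2 : y ≤ 0) :
    phi γ μ h s (y + v) ≤ -y := by
  have := c.Gplus_mono h2
  rw [zero_add, c.phi_v] at this
  linarith

lemma Ctx.g_le_neg (c : Ctx γ μ g v L h s) (y : ℝ) : g y ≤ ((-y : ℝ) : EReal) := by
  by_cases hy : y ∈ Set.Icc L 0
  · rw [(c.g_eq_phi hy.1 hy.2).1]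
    exact_mod_cast c.phi_le_neg hy.2
  · rw [c.hbot y hy]; exact bot_le

lemma Ctx.h_le_neg (c : Ctx γ μ g v L h s) (w : ℝ) : h w ≤ -w := by
  refine c.h_le_bound (fun y => ?_)
  refine le_trans (EReal.sub_le_sub (c.g_le_neg y) le_rfl) ?_
  rw [← EReal.coe_sub]
  have : -y - |w - y| ≤ -w := by
    have := le_abs_self (w - y); linarith
  exact_mod_cast this

lemma Ctx.h_le_negL (c : Ctx γ μ g v L h s) (w : ℝ) : h w ≤ -L := by
  refine c.h_le_bound (fun y => ?_)
  by_cases hy : y ∈ Set.Icc L 0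
  · refine le_trans (EReal.sub_le_sub (c.g_le_neg y) le_rfl) ?_
    rw [← EReal.coe_sub]
    have : -y - |w - y| ≤ -L := by
      have h1 := abs_nonneg (w - y); have := hy.1; linarith
    exact_mod_cast this
  · rw [c.hbot y hy]
    exact bot_le

lemma Ctx.h_nonneg (c : Ctx γ μ g v L h s) {w : ℝ} (hw : 0 ≤ w) : h w = -w := by
  refine le_antisymm (c.h_le_neg w) ?_
  have := c.h_ge w c.g_zero
  rw [sub_zero] at this
  rw [abs_of_nonneg hw] at this
  linarith

end Anc


namespace Anc
variable {γ μ v L s : ℝ} {g : ℝ → EReal} {h : ℝ → ℝ}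

/-- the threshold function -/
noncomputable def psi (γ μ : ℝ) (h : ℝ → ℝ) (ξ : ℝ) : ℝ :=
  sSup (Set.range (phi γ μ h ξ))

lemma Ctx.psi_bdd (c : Ctx γ μ g v L h s) (ξ : ℝ) :
    BddAbove (Set.range (phi γ μ h ξ)) := by
  refine ⟨1 - γ - L, ?_⟩
  rintro r ⟨x, rfl⟩
  have h1 := c.h_le_negL x
  have h2 : 0 ≤ μ * max (ξ - x) 0 := mul_nonneg c.hμ.le (le_max_right _ _)
  unfold phi
  linarith

lemma Ctx.psi_ge (c : Ctx γ μ g v L h s) (ξ x : ℝ) : phi γ μ h ξ x ≤ psi γ μ h ξ :=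
  le_csSup (c.psi_bdd ξ) ⟨x, rfl⟩

lemma Ctx.psi_le (c : Ctx γ μ g v L h s) {ξ B : ℝ} (hb : ∀ x, phi γ μ h ξ x ≤ B) :
    psi γ μ h ξ ≤ B := csSup_le (Set.range_nonempty _) (by rintro r ⟨x, rfl⟩; exact hb x)

lemma Ctx.phi_xi_lip (c : Ctx γ μ g v L h s) (ξ ξ' x : ℝ) :
    phi γ μ h ξ' x ≤ phi γ μ h ξ x + μ * |ξ' - ξ| := by
  unfold phi
  have h2 : max (ξ - x) 0 ≤ max (ξ' - x) 0 + |ξ' - ξ| := by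
    rcases le_total (ξ - x) 0 with hc | hc
    · have := abs_nonneg (ξ' - ξ)
      have := le_max_right (ξ' - x) 0
      simp [max_eq_right hc]
      positivity
    · rw [max_eq_left hc]
      rcases le_total (ξ' - x) 0 with hd | hd
      · rw [max_eq_right hd]
        have := le_abs_self (ξ - ξ')
        rw [abs_sub_comm ξ ξ'] at this
        linarith
      · rw [max_eq_left hd]
        have := le_abs_self (ξ - ξ')
        rw [abs_sub_comm ξ ξ'] at this
        linarith
  have := mul_le_mul_of_nonneg_left h2 c.hμ.le
  linarith

lemma Ctx.psi_lip (c : Ctx γ μ g v L h s) (ξ ξ' : ℝ) :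
    psi γ μ h ξ' ≤ psi γ μ h ξ + μ * |ξ' - ξ| := by
  refine c.psi_le (fun x => ?_)
  refine le_trans (c.phi_xi_lip ξ ξ' x) ?_
  have := c.psi_ge ξ x
  linarith

/-- for large ξ the sup is below γ -/
lemma Ctx.psi_big (c : Ctx γ μ g v L h s) {ξ : ℝ}
    (h1 : 2 * (1 - γ) ≤ ξ) (h2 : 2 * (1 - γ - L) / μ ≤ ξ) : psi γ μ h ξ < γ := by
  have hγ0 := c.hγ0
  refine lt_of_le_of_lt (c.psi_le (B := 0) (fun x => ?_)) hγ0
  rcases le_total (ξ / 2) x with hc | hc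
  · have hh := c.h_le_neg x
    have hpen : 0 ≤ μ * max (ξ - x) 0 := mul_nonneg c.hμ.le (le_max_right _ _)
    unfold phi; linarith
  · have hh := c.h_le_negL x
    have hge : ξ / 2 ≤ max (ξ - x) 0 := le_trans (by linarith) (le_max_left _ _)
    have := mul_le_mul_of_nonneg_left hge c.hμ.le
    have h3 : 2 * (1 - γ - L) ≤ μ * ξ := by
      rw [div_le_iff₀ c.hμ] at h2; linarith
    unfold phi
    nlinarith [c.hμ]

/-- iSup of coercions is the coercion of sSup -/
lemma isup_coe {f : ℝ → ℝ} (hbd : BddAbove (Set.range f)) :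
    (⨆ x : ℝ, ((f x : ℝ) : EReal)) = ((sSup (Set.range f) : ℝ) : EReal) := by
  apply le_antisymm
  · exact iSup_le (fun x => EReal.coe_le_coe_iff.2 (le_csSup hbd ⟨x, rfl⟩))
  · set b := ⨆ x : ℝ, ((f x : ℝ) : EReal) with hb
    have hble : ∀ x, ((f x : ℝ) : EReal) ≤ b := fun x => le_iSup (fun x => ((f x : ℝ) : EReal)) x
    have hbne : b ≠ ⊥ := by
      intro hc
      have := hble 0
      rw [hc] at this
      exact EReal.coe_ne_bot _ (le_bot_iff.1 this)
    rcases eq_or_ne b ⊤ with ht | ht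
    · rw [ht]; exact le_top
    · have : ∀ x, f x ≤ b.toReal := by
        intro x
        have := hble x
        rw [← EReal.coe_toReal ht hbne] at this
        exact_mod_cast this
      have : sSup (Set.range f) ≤ b.toReal :=
        csSup_le (Set.range_nonempty _) (by rintro r ⟨x, rfl⟩; exact this x)
      calc ((sSup (Set.range f) : ℝ) : EReal) ≤ (b.toReal : EReal) := by exact_mod_cast this
        _ = b := EReal.coe_toReal ht hbne

lemma Ctx.Phi_coe (c : Ctx γ μ g v L h s) (ξ x : ℝ) :
    Phi γ μ g ξ x = ((phi γ μ h ξ x : ℝ) : EReal) := by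
  unfold Phi
  rw [c.coe_h x]
  unfold phi
  rw [coe_arith]

lemma Ctx.iSup_Phi (c : Ctx γ μ g v L h s) (ξ : ℝ) :
    (⨆ x : ℝ, Phi γ μ g ξ x) = ((psi γ μ h ξ : ℝ) : EReal) := by
  have : (fun x : ℝ => Phi γ μ g ξ x) = fun x : ℝ => ((phi γ μ h ξ x : ℝ) : EReal) :=
    funext (c.Phi_coe ξ)
  rw [this]
  exact isup_coe (c.psi_bdd ξ)

lemma Ctx.setXi_eq (c : Ctx γ μ g v L h s) :
    {ξ : ℝ | (γ : EReal) ≤ ⨆ x : ℝ, Phi γ μ g ξ x} = {ξ : ℝ | γ ≤ psi γ μ h ξ} := by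
  ext ξ
  simp only [Set.mem_setOf_eq, c.iSup_Phi ξ]
  exact_mod_cast Iff.rfl

/-- in the non-degenerate case the threshold satisfies ψ(s) = γ -/
lemma Ctx.psi_s (c : Ctx γ μ g v L h s)
    (hne' : {ξ : ℝ | γ ≤ psi γ μ h ξ}.Nonempty) : psi γ μ h s = γ := by
  set S := {ξ : ℝ | γ ≤ psi γ μ h ξ} with hS
  have hbdd' : BddAbove S := by
    refine ⟨max (2 * (1 - γ)) (2 * (1 - γ - L) / μ), ?_⟩
    intro ξ hξ
    by_contra hc
    push_neg at hc
    have := c.psi_big (le_of_lt (lt_of_le_of_lt (le_max_left _ _) hc))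
      (le_of_lt (lt_of_le_of_lt (le_max_right _ _) hc))
    exact absurd hξ (by simp [hS]; linarith)
  have hseq : s = sSup S := by
    rw [c.hs]
    unfold sNext
    rw [c.setXi_eq]
  apply le_antisymm
  · -- psi s ≤ γ
    refine le_of_forall_pos_le_add (fun ε hε => ?_)
    have hnotin : s + ε / (μ + 1) ∉ S := by
      intro hc
      have := le_csSup hbdd' hc
      rw [← hseq] at this
      have hp : 0 < ε / (μ + 1) := div_pos hε (by linarith [c.hμ])
      linarith
    have hlt : psi γ μ h (s + ε / (μ + 1)) < γ := by
      by_contra hc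
      push_neg at hc
      exact hnotin hc
    have := c.psi_lip (s + ε / (μ + 1)) s
    have habs : |s - (s + ε / (μ + 1))| = ε / (μ + 1) := by
      rw [show s - (s + ε / (μ + 1)) = -(ε / (μ + 1)) by ring, abs_neg]
      exact abs_of_nonneg (div_nonneg hε.le (by linarith [c.hμ]))
    rw [habs] at this
    have hlt2 : μ * (ε / (μ + 1)) ≤ ε := by
      have hme : μ + 1 ≠ 0 := ne_of_gt (by linarith [c.hμ])
      have h5 : μ * (ε / (μ + 1)) * (μ + 1) = μ * ε := by
        field_simp
      nlinarith [hε.le, c.hμ]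
    linarith
  · -- γ ≤ psi s
    refine le_of_forall_pos_le_add (fun ε hε => ?_)
    have hεp : 0 < ε / (μ + 1) := div_pos hε (by linarith [c.hμ])
    obtain ⟨ξ, hξS, hξgt⟩ : ∃ ξ ∈ S, s - ε / (μ + 1) < ξ := by
      apply exists_lt_of_lt_csSup hne'
      rw [← hseq]; linarith
    have hξle : ξ ≤ s := by
      have := le_csSup hbdd' hξS
      rw [← hseq] at this; exact this
    have hlip := c.psi_lip s ξ
    have habs : |ξ - s| ≤ ε / (μ + 1) := by
      rw [abs_sub_comm, abs_of_nonneg (by linarith)]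
      linarith
    have hγξ : γ ≤ psi γ μ h ξ := hξS
    have hlt2 : μ * |ξ - s| ≤ ε := by
      have h2 : μ * |ξ - s| ≤ μ * (ε / (μ + 1)) := mul_le_mul_of_nonneg_left habs c.hμ.le
      have h3 : μ * (ε / (μ + 1)) ≤ ε := by
        have hme : μ + 1 ≠ 0 := ne_of_gt (by linarith [c.hμ])
        have h5 : μ * (ε / (μ + 1)) * (μ + 1) = μ * ε := by
          field_simp
        nlinarith [hε.le, c.hμ]
      linarith
    linarith

end Anc


namespace Anc
variable {γ μ v L s : ℝ} {g : ℝ → EReal} {h : ℝ → ℝ}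

lemma piE_coe_eq_coe {a r : ℝ} (he : piE (a : EReal) = (r : EReal)) : a = r := by
  rcases piE_coe_cases a with ⟨h1, _⟩ | ⟨h1, _⟩
  · rw [h1] at he; exact_mod_cast he
  · rw [h1] at he; exact absurd he.symm (EReal.coe_ne_bot r)

lemma Ctx.nonjunk (c : Ctx γ μ g v L h s) : {ξ : ℝ | γ ≤ psi γ μ h ξ}.Nonempty := by
  by_contra hc
  have hsempty : {ξ : ℝ | γ ≤ psi γ μ h ξ} = ∅ := Set.not_nonempty_iff_eq_empty.1 hc
  have hs0 : s = 0 := by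
    rw [c.hs]
    unfold sNext
    rw [c.setXi_eq, hsempty, Real.sSup_empty]
  have h00 : h 0 = 0 := by
    have := c.h_nonneg (le_refl 0); simpa using this
  have hφ0 : phi γ μ h s 0 = 1 - γ := by
    unfold phi
    rw [hs0]
    simp [h00]
  -- v > 0
  have hv0 : 0 < v := by
    have hga : g (-v) = ((1 - γ : ℝ) : EReal) := by
      have hw := c.wave' (-v)
      rw [show -v + v = (0:ℝ) by ring, hφ0] at hw
      rw [hw, piE_coe_of_nonneg (by linarith [c.hγ1])]
    have hvle : -v ≤ 0 := by
      have hmem := c.mem_Icc_of_pos (y := -v) (by rw [hga]; exact_mod_cast (by linarith [c.hγ1] : (0:ℝ) < 1 - γ))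
      exact hmem.2
    rcases eq_or_lt_of_le hvle with he | hlt
    · exfalso
      have hveq : v = 0 := by linarith
      have := c.phi_v
      rw [hveq, hφ0] at this
      linarith [c.hγ1]
    · linarith
  -- v = 1 - γ
  have hv1 : v = 1 - γ := by
    have := c.phi_v
    unfold phi at this
    rw [hs0, c.h_nonneg hv0.le] at this
    rw [max_eq_right (by linarith)] at this
    simp at this
    linarith
  -- case L ≥ -v : evaluate φ(L+v)
  rcases le_or_gt (-v) L with hge | hlt
  · have hLv : 0 ≤ L + v := by linarith
    have := c.phi_Lv
    unfold phi at this
    rw [hs0, c.h_nonneg hLv] at this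
    rw [max_eq_right (by linarith)] at this
    have : L = 0 := by simp at this; linarith
    exact absurd this (ne_of_lt c.hLlt)
  -- case L < -v : the n = 2 equation gives a contradiction
  · set M := max (-v) (L + v) with hM
    have hM0 : M < 0 := by
      rw [hM, max_lt_iff]
      constructor <;> linarith
    set u₀ := M / 2 with hu₀
    have hu₀0 : u₀ < 0 := by rw [hu₀]; linarith
    have hu₀M : M < u₀ := by rw [hu₀]; linarith
    have hu₀v : -v < u₀ := lt_of_le_of_lt (le_max_left _ _) hu₀M
    have hu₀L : L + v < u₀ := lt_of_le_of_lt (le_max_right _ _) hu₀M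
    -- the point u₀ - v is in the support
    have hIcc : L ≤ u₀ - v ∧ u₀ - v ≤ 0 := ⟨by linarith, by linarith⟩
    obtain ⟨hgr, hrpos⟩ := c.g_eq_phi hIcc.1 hIcc.2
    set r := phi γ μ h s (u₀ - v + v) with hr
    -- the n = 1 equation at u₀ - v
    have heq1 : 1 - γ + h u₀ + μ * u₀ = r := by
      rw [hr]
      unfold phi
      rw [hs0, show u₀ - v + v = u₀ by ring]
      rw [max_eq_left (by linarith)]
      ring
    -- the n = 2 equation
    have hg1 : gIter γ μ g 1 = fun x => g (x - v) := by
      funext x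
      have := c.hIter 1 le_rfl x
      simpa using this
    have coe_h1 : ∀ x : ℝ, (⨆ y : ℝ, g (y - v) - ((|x - y| : ℝ) : EReal)) = ((h (x - v) : ℝ) : EReal) := by
      intro x
      apply le_antisymm
      · refine iSup_le (fun y => ?_)
        rw [← c.coe_h (x - v)]
        have harg : |x - y| = |(x - v) - (y - v)| := by rw [show (x - v) - (y - v) = x - y by ring]
        rw [harg]
        exact le_iSup (fun z => g z - ((|(x - v) - z| : ℝ) : EReal)) (y - v)
      · rw [← c.coe_h (x - v)]
        refine iSup_le (fun z => ?_)
        have harg : |x - v - z| = |x - (z + v)| := by rw [show x - (z + v) = x - v - z by ring]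
        rw [harg]
        have : g z = g ((z + v) - v) := by rw [show (z + v) - v = z by ring]
        rw [this]
        exact le_iSup (fun y => g (y - v) - ((|x - y| : ℝ) : EReal)) (z + v)
    have hPhi1 : ∀ ξ x : ℝ, Phi γ μ (fun x => g (x - v)) ξ x
        = ((phi γ μ h (ξ - v) (x - v) : ℝ) : EReal) := by
      intro ξ x
      unfold Phi
      rw [coe_h1 x]
      unfold phi
      rw [show (ξ - v) - (x - v) = ξ - x by ring, coe_arith]
    have hisup1 : ∀ ξ : ℝ, (⨆ x : ℝ, Phi γ μ (fun x => g (x - v)) ξ x)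
        = ((psi γ μ h (ξ - v) : ℝ) : EReal) := by
      intro ξ
      have h1 : (fun x : ℝ => Phi γ μ (fun x => g (x - v)) ξ x)
          = fun x : ℝ => ((phi γ μ h (ξ - v) (x - v) : ℝ) : EReal) := funext (hPhi1 ξ)
      rw [h1]
      have h2 : (fun x : ℝ => phi γ μ h (ξ - v) (x - v))
          = (phi γ μ h (ξ - v)) ∘ (fun x : ℝ => x - v) := rfl
      have h3 : Set.range (fun x : ℝ => phi γ μ h (ξ - v) (x - v))
          = Set.range (phi γ μ h (ξ - v)) := by
        rw [h2, Set.range_comp]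
        have : Set.range (fun x : ℝ => x - v) = Set.univ := by
          ext z; simp
          exact ⟨z + v, by ring⟩
        rw [this, Set.image_univ]
      have h4 : psi γ μ h (ξ - v) = sSup (Set.range (fun x : ℝ => phi γ μ h (ξ - v) (x - v))) := by
        unfold psi; rw [h3]
      rw [h4]
      apply isup_coe
      rw [h3]
      exact c.psi_bdd (ξ - v)
    have hsnext1 : sNext γ μ (fun x => g (x - v)) = 0 := by
      unfold sNext
      have hempty : {ξ : ℝ | (γ : EReal) ≤ ⨆ x : ℝ, Phi γ μ (fun x => g (x - v)) ξ x} = ∅ := by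
        ext ξ
        simp only [Set.mem_setOf_eq, Set.mem_empty_iff_false, iff_false]
        rw [hisup1 ξ]
        intro hcc
        have : γ ≤ psi γ μ h (ξ - v) := by exact_mod_cast hcc
        have : ξ - v ∈ {ξ : ℝ | γ ≤ psi γ μ h ξ} := this
        rw [hsempty] at this
        exact this
      rw [hempty, Real.sSup_empty]
    have heq2 : 1 - γ + h u₀ = r := by
      have h2 := c.hIter 2 (by norm_num) (u₀ + v)
      have h2' : gIter γ μ g 2 (u₀ + v) = piE (Phi γ μ (gIter γ μ g 1) (sNext γ μ (gIter γ μ g 1)) (u₀ + v)) := rfl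
      rw [h2', hg1, hsnext1, hPhi1] at h2
      rw [show u₀ + v - (2:ℕ) * v = u₀ - v by push_cast; ring] at h2
      rw [hgr] at h2
      have := piE_coe_eq_coe h2
      rw [show (0:ℝ) - v = -v by ring] at this
      unfold phi at this
      rw [show u₀ + v - v = u₀ by ring] at this
      rw [max_eq_right (by linarith)] at this
      linarith
    have : μ * u₀ = 0 := by linarith
    have : u₀ = 0 := by
      rcases mul_eq_zero.1 this with hh | hh
      · exact absurd hh (ne_of_gt c.hμ)
      · exact hh
    linarith

/-- existence of the maximum point with value γ -/
lemma Ctx.exists_max (c : Ctx γ μ g v L h s) :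
    (∀ x : ℝ, phi γ μ h s x ≤ γ) ∧
    ∃ ym : ℝ, ym ∈ Set.Icc L 0 ∧ phi γ μ h s (ym + v) = γ ∧ g ym = ((γ : ℝ) : EReal) := by
  have hpsis : psi γ μ h s = γ := c.psi_s c.nonjunk
  have hle : ∀ x : ℝ, phi γ μ h s x ≤ γ := fun x => le_trans (c.psi_ge s x) hpsis.le
  refine ⟨hle, ?_⟩
  -- continuity of φ
  have hcont : Continuous (phi γ μ h s) := by
    have hlw : LipschitzWith (Real.toNNReal (1 + μ)) (phi γ μ h s) := by
      apply LipschitzWith.of_dist_le_mul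
      intro x y
      rw [Real.dist_eq, Real.dist_eq, Real.coe_toNNReal _ (by linarith [c.hμ] : (0:ℝ) ≤ 1 + μ)]
      rcases abs_cases (phi γ μ h s x - phi γ μ h s y) with ⟨he, _⟩ | ⟨he, _⟩ <;> rw [he]
      · have := c.phi_lip y x
        have h2 : (1 + μ) * |x - y| ≤ (1 + μ) * |x - y| := le_rfl
        linarith
      · have := c.phi_lip x y
        rw [abs_sub_comm y x] at this
        linarith
    exact hlw.continuous
  set lo := s - (1 - γ - L) / μ - 1 with hlo
  set hi := (1 - γ) + 1 with hhi
  have hvK : v ∈ Set.Icc lo hi := by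
    constructor
    · -- φ(v) = 0 ≥ 0 gives bounds
      have h0 := c.phi_v
      have hh := c.h_le_negL v
      have hpenb : μ * max (s - v) 0 ≤ 1 - γ - L := by
        unfold phi at h0; linarith
      have : max (s - v) 0 ≤ (1 - γ - L) / μ := by
        rw [le_div_iff₀ c.hμ]; linarith [mul_comm μ (max (s - v) 0)]
      have := le_trans (le_max_left (s - v) 0) this
      rw [hlo]; linarith
    · have h0 := c.phi_v
      have hh := c.h_le_neg v
      have hpen : 0 ≤ μ * max (s - v) 0 := mul_nonneg c.hμ.le (le_max_right _ _)
      unfold phi at h0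
      rw [hhi]; linarith
  obtain ⟨x₀, hx₀K, hx₀max'⟩ :=
    (isCompact_Icc (a := lo) (b := hi)).exists_isMaxOn ⟨v, hvK⟩ hcont.continuousOn
  have hx₀max : ∀ x ∈ Set.Icc lo hi, phi γ μ h s x ≤ phi γ μ h s x₀ :=
    fun x hx => hx₀max' hx
  have hallx : ∀ x : ℝ, phi γ μ h s x ≤ phi γ μ h s x₀ := by
    intro x
    by_cases hx : x ∈ Set.Icc lo hi
    · exact hx₀max x hx
    · -- outside the window φ < 0
      have hx2 : x < lo ∨ hi < x := by
        rw [Set.mem_Icc] at hx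
        by_contra hcc
        push_neg at hcc
        exact hx ⟨hcc.1, hcc.2⟩
      have hxA : phi γ μ h s x < 0 := by
        rcases hx2 with hc | hc
        · -- x < lo : big penalty
          have hh := c.h_le_negL x
          have hge : (1 - γ - L) / μ + 1 ≤ max (s - x) 0 := by
            refine le_trans ?_ (le_max_left _ _)
            rw [hlo] at hc
            linarith
          have h2 := mul_le_mul_of_nonneg_left hge c.hμ.le
          have h3 : μ * ((1 - γ - L) / μ + 1) = (1 - γ - L) + μ := by
            rw [mul_add, mul_div_cancel₀ _ c.hμ.ne', mul_one]
          unfold phi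
          nlinarith [c.hμ]
        · have hh := c.h_le_neg x
          have hpen : 0 ≤ μ * max (s - x) 0 := mul_nonneg c.hμ.le (le_max_right _ _)
          rw [hhi] at hc
          unfold phi
          linarith
      have h0 := c.phi_v
      have hvb := hx₀max v hvK
      linarith
  have hx₀γ : phi γ μ h s x₀ = γ := by
    apply le_antisymm (hle x₀)
    exact le_trans (le_of_eq hpsis.symm) (c.psi_le hallx)
  refine ⟨x₀ - v, ?_, by rw [show x₀ - v + v = x₀ by ring]; exact hx₀γ, ?_⟩
  · apply c.mem_Icc_of_pos
    have hw := c.wave' (x₀ - v)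
    rw [show x₀ - v + v = x₀ by ring, hx₀γ] at hw
    rw [hw, piE_coe_of_nonneg c.hγ0.le]
    exact_mod_cast c.hγ0
  · have hw := c.wave' (x₀ - v)
    rw [show x₀ - v + v = x₀ by ring, hx₀γ] at hw
    rw [hw, piE_coe_of_nonneg c.hγ0.le]

end Anc


namespace Anc
variable {γ μ v L s : ℝ} {g : ℝ → EReal} {h : ℝ → ℝ}

lemma piE_le (x : EReal) : piE x ≤ x := by
  unfold piE; split_ifs with h1
  · exact le_rfl
  · exact bot_le

lemma Ctx.g_le_gamma (c : Ctx γ μ g v L h s) (y : ℝ) : g y ≤ ((γ : ℝ) : EReal) := by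
  obtain ⟨hle, _⟩ := c.exists_max
  calc g y = piE (((phi γ μ h s (y + v) : ℝ)) : EReal) := c.wave' y
    _ ≤ (((phi γ μ h s (y + v) : ℝ)) : EReal) := piE_le _
    _ ≤ ((γ : ℝ) : EReal) := by exact_mod_cast hle (y + v)

lemma Ctx.h_le_gamma (c : Ctx γ μ g v L h s) (w : ℝ) : h w ≤ γ := by
  refine c.h_le_bound (fun y => ?_)
  refine le_trans (EReal.sub_le_sub (c.g_le_gamma y) le_rfl) ?_
  rw [← EReal.coe_sub]
  have : γ - |w - y| ≤ γ := by
    have := abs_nonneg (w - y); linarith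
  exact_mod_cast this

lemma Ctx.v_pos (c : Ctx γ μ g v L h s) : 0 < v := by
  obtain ⟨hle, ym, hymIcc, hymφ, hymg⟩ := c.exists_max
  rcases lt_trichotomy v 0 with hv | hv | hv
  · -- v < 0
    exfalso
    -- φ(0) < 0 since g(-v) = ⊥
    have hga : g (-v) = ⊥ := c.hbot (-v) (by
      intro hcc
      have := hcc.2
      linarith)
    have hφ0 : phi γ μ h s 0 < 0 := by
      have hw := c.wave' (-v)
      rw [show -v + v = (0:ℝ) by ring] at hw
      rcases piE_coe_cases (phi γ μ h s 0) with ⟨he, hp⟩ | ⟨he, hp⟩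
      · rw [he] at hw; rw [hga] at hw; exact absurd hw (EReal.coe_ne_bot _).symm
      · exact hp
    have h00 : h 0 = 0 := by simpa using c.h_nonneg (le_refl 0)
    have hspos : 1 - γ < μ * max s 0 := by
      unfold phi at hφ0
      rw [h00, show s - 0 = s by ring] at hφ0
      linarith
    have hs0 : 0 < s := by
      by_contra hcc
      push_neg at hcc
      rw [max_eq_right hcc] at hspos
      simp at hspos
      linarith [c.hγ1]
    rw [max_eq_left hs0.le] at hspos
    -- the max point equation
    have hmax := hymφ
    unfold phi at hmax
    have hhb := c.h_le_gamma (ym + v)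
    have hpen : μ * max (s - (ym + v)) 0 ≤ 1 - γ := by linarith
    have hge : s ≤ s - (ym + v) := by
      have := hymIcc.2; linarith
    have : s ≤ max (s - (ym + v)) 0 := le_trans hge (le_max_left _ _)
    have := mul_le_mul_of_nonneg_left this c.hμ.le
    linarith
  · -- v = 0
    exfalso
    subst hv
    have hφv := c.phi_v
    have h00 : h 0 = 0 := by simpa using c.h_nonneg (le_refl 0)
    unfold phi at hφv
    rw [h00, show s - 0 = s by ring] at hφv
    have hs1 : μ * max s 0 = 1 - γ := by linarith
    have hs0 : 0 < s := by
      by_contra hcc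
      push_neg at hcc
      rw [max_eq_right hcc] at hs1
      simp at hs1
      linarith [c.hγ1]
    rw [max_eq_left hs0.le] at hs1
    -- max point
    have hmax := hymφ
    rw [add_zero] at hmax
    have hh1 : γ ≤ h ym := by
      have := c.h_ge ym hymg
      simpa using this
    have hh2 : h ym = γ := le_antisymm (c.h_le_gamma ym) hh1
    unfold phi at hmax
    rw [hh2] at hmax
    have hym0 : ym ≤ 0 := hymIcc.2
    have hpen2 : μ * max (s - ym) 0 = 1 - γ := by linarith
    have hge : s - ym ≤ max (s - ym) 0 := le_max_left _ _
    have hym00 : ym = 0 := by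
      by_contra hcc
      have hlt : s < s - ym := by
        rcases lt_or_eq_of_le hym0 with hc | hc
        · linarith
        · exact absurd hc hcc
      have hstrict := mul_lt_mul_of_pos_left hlt c.hμ
      have h2 := mul_le_mul_of_nonneg_left hge c.hμ.le
      linarith
    have hγ00 : ((γ:ℝ):EReal) = ((0:ℝ):EReal) := by rw [← hymg, hym00, c.g_zero]
    have : γ = (0:ℝ) := by exact_mod_cast hγ00
    linarith [c.hγ0]
  · exact hv

lemma Ctx.v_id (c : Ctx γ μ g v L h s) : v = 1 - γ - μ * max (s - v) 0 := by
  have hφv := c.phi_v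
  unfold phi at hφv
  rw [c.h_nonneg c.v_pos.le] at hφv
  linarith

lemma Ctx.v_le (c : Ctx γ μ g v L h s) : v ≤ 1 - γ := by
  have := c.v_id
  have hpen : 0 ≤ μ * max (s - v) 0 := mul_nonneg c.hμ.le (le_max_right _ _)
  linarith

end Anc


namespace Anc
variable {γ μ : ℝ}

lemma kmul_le (hμ : 0 < μ) : ((kFl μ : ℝ)) * μ ≤ 1 := by
  have h1 : ((kFl μ : ℝ)) ≤ 1 / μ := Int.floor_le (1 / μ)
  rw [le_div_iff₀ hμ] at h1
  exact h1

lemma one_lt_ksucc (hμ : 0 < μ) : 1 < ((kFl μ : ℝ) + 1) * μ := by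
  have h1 : 1 / μ < (kFl μ : ℝ) + 1 := Int.lt_floor_add_one (1 / μ)
  rw [div_lt_iff₀ hμ] at h1
  linarith [h1]

lemma k_pos (hμ : 0 < μ) (hμ1 : μ < 1) : 1 ≤ kFl μ := by
  rw [kFl, Int.le_floor]
  rw [le_div_iff₀ hμ]
  push_cast
  linarith

lemma gammaC_zero (hμ1 : 1 < μ) : gammaC μ = 0 := by
  have hk : kFl μ = 0 := by
    rw [kFl, Int.floor_eq_zero_iff]
    constructor
    · positivity
    · rw [div_lt_one (by linarith)]; exact hμ1
  rw [gammaC, hk]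
  norm_num

lemma gammaC_pieces (hμ : 0 < μ) (hμ1 : μ < 1) :
    0 < 2 - (kFl μ : ℝ) * μ ∧ 0 < 2 - ((kFl μ : ℝ) + 1) * μ ∧ (1:ℝ) ≤ (kFl μ : ℝ) ∧
    0 < (kFl μ : ℝ) * (2 - ((kFl μ : ℝ) + 1) * μ) / 2 := by
  have h1 := kmul_le hμ
  have h3 : (1:ℝ) ≤ (kFl μ : ℝ) := by exact_mod_cast k_pos hμ hμ1
  have h2 : 0 < 2 - ((kFl μ : ℝ) + 1) * μ := by nlinarith
  refine ⟨by nlinarith, h2, h3, by positivity⟩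

lemma gammaC_formula (hμ : 0 < μ) (hμ1 : μ < 1) :
    gammaC μ * (1 + (kFl μ : ℝ) * (2 - ((kFl μ : ℝ) + 1) * μ) / 2)
      = (kFl μ : ℝ) * (2 - ((kFl μ : ℝ) + 1) * μ) / 2 := by
  obtain ⟨h1, h2, h3, h4⟩ := gammaC_pieces hμ hμ1
  rw [gammaC]
  have hk1 : (kFl μ : ℝ) + 1 ≠ 0 := by linarith
  have hk2 : 2 - (kFl μ : ℝ) * μ ≠ 0 := ne_of_gt h1
  field_simp
  ring

lemma le_gammaC (hμ : 0 < μ) (hμ1 : μ < 1) (hγ1 : γ < 1)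
    (hine : γ ≤ (1 - γ) * ((kFl μ : ℝ) * (2 - ((kFl μ : ℝ) + 1) * μ) / 2)) : γ ≤ gammaC μ := by
  obtain ⟨h1, h2, h3, h4⟩ := gammaC_pieces hμ hμ1
  set F := (kFl μ : ℝ) * (2 - ((kFl μ : ℝ) + 1) * μ) / 2 with hF
  have hform := gammaC_formula hμ hμ1
  rw [← hF] at hform
  have hpos : 0 < 1 + F := by linarith
  nlinarith [hform]

lemma gammaC_lt (hμ : 0 < μ) (hμ1 : μ < 1)
    (hine : (1 - γ) * ((kFl μ : ℝ) * (2 - ((kFl μ : ℝ) + 1) * μ) / 2) < γ) : gammaC μ < γ := by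
  obtain ⟨h1, h2, h3, h4⟩ := gammaC_pieces hμ hμ1
  set F := (kFl μ : ℝ) * (2 - ((kFl μ : ℝ) + 1) * μ) / 2 with hF
  have hform := gammaC_formula hμ hμ1
  rw [← hF] at hform
  have hpos : 0 < 1 + F := by linarith
  nlinarith [hform]

lemma chain_up (f : ℕ → ℝ) : ∀ (K : ℕ), (∀ j, j + 1 ≤ K → f j ≤ f (j+1)) → ∀ j, j ≤ K → f j ≤ f K := by
  intro K
  induction K with
  | zero => intro _ j hj; rw [Nat.le_zero.1 hj]
  | succ n ih =>
    intro hstep j hj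
    rcases Nat.eq_or_lt_of_le hj with he | hlt
    · rw [he]
    · have h1 : j ≤ n := Nat.lt_succ_iff.1 hlt
      exact le_trans (ih (fun i hi => hstep i (le_trans hi (Nat.le_succ n))) j h1)
        (hstep n (le_refl _))

lemma chain_down (f : ℕ → ℝ) (K : ℕ) (hstep : ∀ i, K ≤ i → f (i+1) ≤ f i) :
    ∀ j, K ≤ j → f j ≤ f K := by
  intro j
  induction j with
  | zero => intro hKj; rw [Nat.le_zero.1 hKj]
  | succ n ih =>
    intro hKj
    rcases Nat.eq_or_lt_of_le hKj with he | hlt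
    · rw [← he]
    · have h1 : K ≤ n := Nat.lt_succ_iff.1 hlt
      exact le_trans (hstep n h1) (ih h1)

end Anc


namespace Anc
variable {γ μ v L s : ℝ} {g : ℝ → EReal} {h : ℝ → ℝ}

noncomputable def aseq (μ v : ℝ) : ℕ → ℝ :=
  fun j => (j:ℝ) * v * (1 - μ) - μ * v * (j:ℝ) * ((j:ℝ) - 1) / 2

/-- concavity: to the right of the max point the profile is nonincreasing -/
lemma Ctx.conc_right_mono (c : Ctx γ μ g v L h s)
    (hle : ∀ x : ℝ, phi γ μ h s x ≤ γ) {ym w y : ℝ}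
    (hymg : g ym = ((γ:ℝ) : EReal)) (hymL : L ≤ ym)
    (h1 : ym ≤ w) (h2 : w ≤ y) (h3 : y ≤ 0) :
    phi γ μ h s (y + v) ≤ phi γ μ h s (w + v) := by
  rcases eq_or_lt_of_le h2 with he | hwy
  · rw [he]
  have hymy : ym < y := lt_of_le_of_lt h1 hwy
  have hgw := (c.g_eq_phi (y := w) (by linarith) (by linarith)).1
  have hgy := (c.g_eq_phi (y := y) (by linarith) h3).1
  set t := (y - w) / (y - ym) with ht
  have ht0 : 0 ≤ t := div_nonneg (by linarith) (by linarith)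
  have ht1 : t ≤ 1 := by
    rw [div_le_one (by linarith)]; linarith
  have hne : y - ym ≠ 0 := ne_of_gt (by linarith)
  have hcomb : t * ym + (1 - t) * y = w := by
    rw [ht]; field_simp; ring
  have hconc := c.conc ym y t ht0 ht1
  rw [hcomb, hymg, hgy, hgw, ← EReal.coe_mul, ← EReal.coe_mul, ← EReal.coe_add] at hconc
  have hreal : t * γ + (1 - t) * phi γ μ h s (y + v) ≤ phi γ μ h s (w + v) := by
    exact_mod_cast hconc
  have hγy : phi γ μ h s (y + v) ≤ γ := hle (y + v)
  nlinarith

/-- h agrees with the profile to the right of the max point -/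
lemma Ctx.hG (c : Ctx γ μ g v L h s)
    (hle : ∀ x : ℝ, phi γ μ h s x ≤ γ) {ym : ℝ}
    (hymg : g ym = ((γ:ℝ) : EReal)) (hymL : L ≤ ym) :
    ∀ w, ym ≤ w → w ≤ 0 → h w = phi γ μ h s (w + v) := by
  intro w hw1 hw2
  apply le_antisymm
  · refine c.h_le_bound (fun y => ?_)
    by_cases hy : y ∈ Set.Icc L 0
    · rw [(c.g_eq_phi hy.1 hy.2).1, ← EReal.coe_sub]
      rcases le_total y w with hyw | hyw
      · have hmono := c.Gplus_mono hyw
        have habs : |w - y| = w - y := abs_of_nonneg (by linarith)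
        have : phi γ μ h s (y + v) - |w - y| ≤ phi γ μ h s (w + v) := by linarith
        exact_mod_cast this
      · have hmono := c.conc_right_mono hle hymg hymL hw1 hyw hy.2
        have : phi γ μ h s (y + v) - |w - y| ≤ phi γ μ h s (w + v) := by
          have := abs_nonneg (w - y); linarith
        exact_mod_cast this
    · rw [c.hbot y hy]; exact bot_le
  · have := c.h_ge w (c.g_eq_phi (le_trans hymL hw1) hw2).1
    simpa using this

/-- CASE A : if v ≤ s then γ ≤ γ_c -/
lemma Ctx.caseA (c : Ctx γ μ g v L h s) (hsv : v ≤ s) : γ ≤ gammaC μ := by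
  obtain ⟨hle, ym, hymIcc, hymφ, hymg⟩ := c.exists_max
  have hv := c.v_pos
  have hym0 : ym ≤ 0 := hymIcc.2
  have hymL : L ≤ ym := hymIcc.1
  -- μ < 1
  have hμlt1 : μ < 1 := by
    by_contra hcc
    push_neg at hcc
    have hsl := c.phi_slope_mu (x := ym + v) (x' := v) (by linarith) hsv
    rw [hymφ, c.phi_v] at hsl
    nlinarith [c.hγ0, mul_nonneg (by linarith : (0:ℝ) ≤ μ - 1) (by linarith : (0:ℝ) ≤ -ym)]
  -- speed identity in case A form
  have hvid : v = 1 - γ - μ * (s - v) := by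
    have := c.v_id
    rw [max_eq_left (by linarith)] at this
    exact this
  -- the index m
  obtain ⟨m, hm, hmmin⟩ : ∃ m : ℕ, (-v < ym + (m:ℝ) * v) ∧
      ∀ i : ℕ, i < m → ¬(-v < ym + (i:ℝ) * v) := by
    have hex : ∃ n : ℕ, -v < ym + (n:ℝ) * v := by
      obtain ⟨n, hn⟩ := exists_nat_gt ((-v - ym) / v)
      refine ⟨n, ?_⟩
      rw [div_lt_iff₀ hv] at hn
      linarith
    exact ⟨Nat.find hex, Nat.find_spec hex, fun i hi => Nat.find_min hex hi⟩
  have hym_le : ∀ i : ℕ, i < m → ym + (i:ℝ) * v ≤ -v := by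
    intro i hi
    have := hmmin i hi
    push_neg at this
    exact this
  have hyi_le0 : ∀ i : ℕ, i ≤ m → ym + (i:ℝ) * v ≤ 0 := by
    intro i hi
    cases m with
    | zero =>
      have : i = 0 := Nat.le_zero.1 hi
      subst this
      simpa using hym0
    | succ n =>
      rcases Nat.eq_or_lt_of_le hi with he | hlt
      · subst he
        have := hym_le n (Nat.lt_succ_self n)
        push_cast
        push_cast at this
        linarith
      · have h2 := hym_le i (Nat.lt_succ_iff.1 hlt |> Nat.lt_succ_of_le)
        linarith
  -- telescoping recursion
  have hrec : ∀ i : ℕ, i < m →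
      phi γ μ h s (ym + (i:ℝ)*v + v)
        = 1 - γ + phi γ μ h s (ym + ((i:ℝ)+1)*v + v) - μ * (s - (ym + ((i:ℝ)+1)*v)) := by
    intro i hi
    have hyi : ym + (i:ℝ)*v ≤ -v := hym_le i hi
    have hyi1le : ym + ((i:ℝ)+1)*v ≤ 0 := by
      have := hyi_le0 (i+1) hi
      push_cast at this
      linarith
    have hyi1ge : ym ≤ ym + ((i:ℝ)+1)*v := by nlinarith
    have hGi := c.hG hle hymg hymL (ym + ((i:ℝ)+1)*v) hyi1ge hyi1le
    have harg : ym + (i:ℝ)*v + v = ym + ((i:ℝ)+1)*v := by ring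
    have hmax : max (s - (ym + (i:ℝ)*v + v)) 0 = s - (ym + ((i:ℝ)+1)*v) := by
      rw [max_eq_left]
      · rw [harg]
      · rw [harg]; linarith
    unfold phi
    rw [hmax, harg, hGi]
    unfold phi
    ring
  -- forward sum
  have hsum : ∀ i : ℕ, i ≤ m →
      phi γ μ h s (ym + (i:ℝ)*v + v)
        = γ - (i:ℝ)*(1-γ) + μ*((i:ℝ)*(s - ym) - v*(i:ℝ)*((i:ℝ)+1)/2) := by
    intro i
    induction i with
    | zero =>
      intro _
      rw [show ym + (0:ℕ)*v + v = ym + v by push_cast; ring, hymφ]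
      push_cast
      ring
    | succ n ih =>
      intro hle'
      have hn : n < m := Nat.lt_of_succ_le hle'
      have e1 := hrec n hn
      have e2 := ih (le_of_lt hn)
      have harg : ym + ((n:ℝ)+1)*v = ym + ((n+1:ℕ):ℝ)*v := by push_cast; ring
      rw [harg] at e1
      push_cast
      push_cast at e1 e2
      linarith
  -- base value
  have hbase : phi γ μ h s (ym + (m:ℝ)*v + v) = (μ-1)*(ym + (m:ℝ)*v) := by
    have harg : (0:ℝ) ≤ ym + (m:ℝ)*v + v := by linarith [hm]
    have hyml := hyi_le0 m le_rfl
    unfold phi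
    rw [c.h_nonneg harg]
    rw [max_eq_left (by linarith)]
    linarith [hvid]
  -- EQ1
  have hEQ1 : γ = (μ - 1 + μ*(m:ℝ))*ym + μ*v*(m:ℝ)*((m:ℝ)+1)/2 := by
    have e1 := hsum m le_rfl
    rw [hbase] at e1
    linear_combination -e1 - (m:ℝ)*hvid
  -- γ ≤ aseq m or aseq (m+1)
  have hma : γ ≤ aseq μ v m ∨ γ ≤ aseq μ v (m+1) := by
    rcases le_total (μ - 1 + μ*(m:ℝ)) 0 with hc | hc
    · right
      have hymge : -((m:ℝ)+1)*v ≤ ym := by linarith [hm]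
      have hmul : (μ - 1 + μ*(m:ℝ))*ym ≤ (μ - 1 + μ*(m:ℝ))*(-((m:ℝ)+1)*v) :=
        mul_le_mul_of_nonpos_left hymge hc
      have heq : (μ - 1 + μ*(m:ℝ))*(-((m:ℝ)+1)*v) + μ*v*(m:ℝ)*((m:ℝ)+1)/2 = aseq μ v (m+1) := by
        unfold aseq; push_cast; ring
      linarith [hEQ1]
    · left
      have hymle : ym ≤ -(m:ℝ)*v := by
        cases m with
        | zero => simpa using hym0
        | succ n =>
          have := hym_le n (Nat.lt_succ_self n)
          push_cast
          linarith
      have hmul : (μ - 1 + μ*(m:ℝ))*ym ≤ (μ - 1 + μ*(m:ℝ))*(-(m:ℝ)*v) :=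
        mul_le_mul_of_nonneg_left hymle hc
      have heq : (μ - 1 + μ*(m:ℝ))*(-(m:ℝ)*v) + μ*v*(m:ℝ)*((m:ℝ)+1)/2 = aseq μ v m := by
        unfold aseq; push_cast; ring
      linarith [hEQ1]
  -- aseq j ≤ aseq K
  set K := (kFl μ).toNat with hK
  have hKcast : ((K:ℕ):ℝ) = ((kFl μ : ℤ):ℝ) := by
    rw [hK]
    have : ((kFl μ).toNat : ℤ) = kFl μ := Int.toNat_of_nonneg (by linarith [k_pos c.hμ hμlt1])
    exact_mod_cast congrArg (fun z : ℤ => (z:ℝ)) this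
  have hK1 : ((K:ℕ):ℝ)*μ ≤ 1 := by rw [hKcast]; exact kmul_le c.hμ
  have hK2 : (1:ℝ) < (((K:ℕ):ℝ)+1)*μ := by rw [hKcast]; exact one_lt_ksucc c.hμ
  have hstepup : ∀ j : ℕ, j+1 ≤ K → aseq μ v j ≤ aseq μ v (j+1) := by
    intro j hj
    have hcast : ((j:ℕ):ℝ)+1 ≤ ((K:ℕ):ℝ) := by exact_mod_cast hj
    have hstep : aseq μ v (j+1) - aseq μ v j = v*(1 - (((j:ℕ):ℝ)+1)*μ) := by
      unfold aseq; push_cast; ring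
    have h2 := mul_le_mul_of_nonneg_right hcast c.hμ.le
    have hmul : (((j:ℕ):ℝ)+1)*μ ≤ 1 := le_trans h2 hK1
    have h3 : 0 ≤ v*(1 - (((j:ℕ):ℝ)+1)*μ) := mul_nonneg hv.le (by linarith)
    linarith
  have hstepdown : ∀ i : ℕ, K ≤ i → aseq μ v (i+1) ≤ aseq μ v i := by
    intro i hi
    have hcast : ((K:ℕ):ℝ) ≤ ((i:ℕ):ℝ) := by exact_mod_cast hi
    have hstep : aseq μ v (i+1) - aseq μ v i = v*(1 - (((i:ℕ):ℝ)+1)*μ) := by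
      unfold aseq; push_cast; ring
    have h2 := mul_le_mul_of_nonneg_right (by linarith : ((K:ℕ):ℝ)+1 ≤ ((i:ℕ):ℝ)+1) c.hμ.le
    have hmul : (1:ℝ) < (((i:ℕ):ℝ)+1)*μ := lt_of_lt_of_le hK2 h2
    have h3 : v*(1 - (((i:ℕ):ℝ)+1)*μ) ≤ 0 := mul_nonpos_of_nonneg_of_nonpos hv.le (by linarith)
    linarith
  have haK : ∀ j : ℕ, aseq μ v j ≤ aseq μ v K := by
    intro j
    rcases le_total j K with hc | hc
    · exact chain_up (aseq μ v) K hstepup j hc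
    · exact chain_down (aseq μ v) K hstepdown j hc
  have hγaK : γ ≤ aseq μ v K := by
    rcases hma with hc | hc
    · exact le_trans hc (haK m)
    · exact le_trans hc (haK (m+1))
  have hF : aseq μ v K = v * (((K:ℕ):ℝ)*(2 - (((K:ℕ):ℝ)+1)*μ)/2) := by
    unfold aseq; ring
  have hFpos : 0 ≤ ((K:ℕ):ℝ)*(2 - (((K:ℕ):ℝ)+1)*μ)/2 := by
    have hKnn : (0:ℝ) ≤ ((K:ℕ):ℝ) := Nat.cast_nonneg K
    have hexp : (((K:ℕ):ℝ)+1)*μ = ((K:ℕ):ℝ)*μ + μ := by ring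
    have h2 : 0 ≤ 2 - (((K:ℕ):ℝ)+1)*μ := by rw [hexp]; linarith [hK1, hμlt1]
    have := mul_nonneg hKnn h2
    linarith
  have hfinal : γ ≤ (1-γ)*(((K:ℕ):ℝ)*(2 - (((K:ℕ):ℝ)+1)*μ)/2) := by
    rw [hF] at hγaK
    exact le_trans hγaK (mul_le_mul_of_nonneg_right c.v_le hFpos)
  apply le_gammaC c.hμ hμlt1 c.hγ1
  rw [← hKcast]
  exact hfinal

end Anc


namespace Anc
variable {γ μ v L s : ℝ} {g : ℝ → EReal} {h : ℝ → ℝ}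

lemma Ctx.vB (c : Ctx γ μ g v L h s) (hsv : s < v) : v = 1 - γ := by
  have := c.v_id
  rw [max_eq_right (by linarith : s - v ≤ 0)] at this
  linarith

lemma Ctx.caseB_plateau (c : Ctx γ μ g v L h s) (hsv : s < v) :
    ∀ y : ℝ, s - v ≤ y → y ≤ 0 → g y = ((-y : ℝ) : EReal) := by
  have hv := c.v_pos
  have hvB := c.vB hsv
  have main : ∀ n : ℕ, ∀ y : ℝ, s - v ≤ y → y ≤ 0 → -((n:ℝ)+1)*v ≤ y → g y = ((-y : ℝ) : EReal) := by
    intro n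
    induction n with
    | zero =>
      intro y h1 h2 h3
      push_cast at h3
      have hyv : 0 ≤ y + v := by linarith
      have hφ : phi γ μ h s (y + v) = -y := by
        unfold phi
        rw [c.h_nonneg hyv, max_eq_right (by linarith : s - (y + v) ≤ 0)]
        linarith
      rw [c.wave' y, hφ, piE_coe_of_nonneg (by linarith : (0:ℝ) ≤ -y)]
    | succ n ih =>
      intro y h1 h2 h3
      rcases le_total (-v) y with hc | hc
      · -- in the base region
        have hyv : 0 ≤ y + v := by linarith
        have hφ : phi γ μ h s (y + v) = -y := by
          unfold phi
          rw [c.h_nonneg hyv, max_eq_right (by linarith : s - (y + v) ≤ 0)]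
          linarith
        rw [c.wave' y, hφ, piE_coe_of_nonneg (by linarith : (0:ℝ) ≤ -y)]
      · -- recurse
        have hygv : g (y + v) = ((-(y + v) : ℝ) : EReal) := by
          apply ih (y + v) (by linarith) (by linarith)
          push_cast at h3 ⊢
          linarith
        have hh : h (y + v) = -(y + v) := by
          apply le_antisymm (c.h_le_neg (y + v))
          have := c.h_ge (y + v) hygv
          simpa using this
        have hφ : phi γ μ h s (y + v) = -y := by
          unfold phi
          rw [hh, max_eq_right (by linarith : s - (y + v) ≤ 0)]
          linarith
        rw [c.wave' y, hφ, piE_coe_of_nonneg (by linarith : (0:ℝ) ≤ -y)]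
  intro y h1 h2
  obtain ⟨n, hn⟩ := exists_nat_gt ((-y) / v)
  rw [div_lt_iff₀ hv] at hn
  exact main n y h1 h2 (by push_cast; nlinarith [hv])

lemma Ctx.p_mem (c : Ctx γ μ g v L h s) (hsv : s < v) : L < s - v ∧ s - v ≤ 0 := by
  have hv := c.v_pos
  have hgp : g (s - v) = ((-(s - v) : ℝ) : EReal) := c.caseB_plateau hsv (s - v) le_rfl (by linarith)
  have hpos : (0:EReal) < g (s - v) := by
    rw [hgp]
    exact_mod_cast (by linarith : (0:ℝ) < -(s - v))
  have hmem := c.mem_Icc_of_pos hpos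
  constructor
  · rcases lt_or_eq_of_le hmem.1 with hc | hc
    · exact hc
    · exfalso
      have := c.g_L
      rw [← hc] at hgp
      rw [this] at hgp
      have h0 : (0:ℝ) = -L := by exact_mod_cast hgp
      linarith [c.hLlt]
  · linarith

/-- CASE B : if s < v then γ_c < γ -/
lemma Ctx.caseB (c : Ctx γ μ g v L h s) (hμne : μ ≠ 1) (hsv : s < v) : gammaC μ < γ := by
  have hv := c.v_pos
  have hvB := c.vB hsv
  rcases lt_or_gt_of_ne hμne with hμlt | hμgt
  swap
  · rw [gammaC_zero hμgt]; exact c.hγ0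
  -- μ < 1, K ≥ 1
  set K := (kFl μ).toNat with hK
  have hKcast : ((K:ℕ):ℝ) = ((kFl μ : ℤ):ℝ) := by
    rw [hK]
    have : ((kFl μ).toNat : ℤ) = kFl μ := Int.toNat_of_nonneg (by linarith [k_pos c.hμ hμlt])
    exact_mod_cast congrArg (fun z : ℤ => (z:ℝ)) this
  have hK1 : ((K:ℕ):ℝ)*μ ≤ 1 := by rw [hKcast]; exact kmul_le c.hμ
  set bi : ℕ → ℝ := fun j => (v - s) + (j:ℝ)*v - μ*v*(j:ℝ)*((j:ℝ)+1)/2 with hbi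
  have hstepup : ∀ j : ℕ, j+1 ≤ K → bi j ≤ bi (j+1) := by
    intro j hj
    have hcast : ((j:ℕ):ℝ)+1 ≤ ((K:ℕ):ℝ) := by exact_mod_cast hj
    have h2 := mul_le_mul_of_nonneg_right hcast c.hμ.le
    have hmul : (((j:ℕ):ℝ)+1)*μ ≤ 1 := le_trans h2 hK1
    have hstep : bi (j+1) - bi j = v*(1 - (((j:ℕ):ℝ)+1)*μ) := by
      rw [hbi]; push_cast; ring
    have h3 : 0 ≤ v*(1 - (((j:ℕ):ℝ)+1)*μ) := mul_nonneg hv.le (by linarith)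
    linarith
  have hb0 : ∀ j : ℕ, j ≤ K → bi 0 ≤ bi j := by
    intro j hj
    exact chain_up bi j (fun i hi => hstepup i (le_trans hi hj)) 0 (Nat.zero_le j)
  have hb0v : bi 0 = v - s := by rw [hbi]; push_cast; ring
  -- induction on node values
  have hnodes : ∀ j : ℕ, j ≤ K → ∃ r : ℝ, g (s - v - (j:ℝ)*v) = ((r:ℝ):EReal) ∧ bi j ≤ r := by
    intro j
    induction j with
    | zero =>
      intro _
      refine ⟨-(s - v), ?_, ?_⟩
      · rw [show s - v - ((0:ℕ):ℝ)*v = s - v by push_cast; ring]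
        exact c.caseB_plateau hsv (s - v) le_rfl (by linarith)
      · rw [hb0v]; linarith
    | succ n ih =>
      intro hle'
      obtain ⟨r, hgr, hbr⟩ := ih (le_trans (Nat.le_succ n) hle')
      have hbpos : 0 < bi (n+1) := by
        have := hb0 (n+1) hle'
        rw [hb0v] at this
        linarith
      have hhr : r ≤ h (s - v - (n:ℝ)*v) := by
        have := c.h_ge (s - v - (n:ℝ)*v) hgr
        simpa using this
      have hφge : bi (n+1) ≤ phi γ μ h s (s - v - ((n:ℝ)+1)*v + v) := by
        have harg : s - v - ((n:ℝ)+1)*v + v = s - v - (n:ℝ)*v := by ring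
        rw [harg]
        unfold phi
        have hpen : max (s - (s - v - (n:ℝ)*v)) 0 = ((n:ℝ)+1)*v := by
          rw [max_eq_left]
          · ring
          · have : (0:ℝ) ≤ (n:ℝ)*v := mul_nonneg (Nat.cast_nonneg n) hv.le
            linarith
        rw [hpen]
        have hstep : bi (n+1) = bi n + v - μ*(((n:ℝ)+1)*v) := by
          rw [hbi]; push_cast; ring
        linarith
      have hφpos : 0 < phi γ μ h s (s - v - ((n:ℝ)+1)*v + v) := lt_of_lt_of_le hbpos hφge
      refine ⟨phi γ μ h s (s - v - ((n:ℝ)+1)*v + v), ?_, hφge⟩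
      rw [show s - v - ((n+1:ℕ):ℝ)*v = s - v - ((n:ℝ)+1)*v by push_cast; ring]
      rw [c.wave' (s - v - ((n:ℝ)+1)*v), piE_coe_of_nonneg hφpos.le]
  obtain ⟨r, hgr, hbr⟩ := hnodes K le_rfl
  have hrγ : r ≤ γ := by
    have := c.g_le_gamma (s - v - (K:ℝ)*v)
    rw [hgr] at this
    exact_mod_cast this
  have hbK : bi K = (v - s) + v*(((K:ℕ):ℝ)*(2 - (((K:ℕ):ℝ)+1)*μ)/2) := by
    rw [hbi]; push_cast; ring
  have hfinal : (1-γ)*(((K:ℕ):ℝ)*(2 - (((K:ℕ):ℝ)+1)*μ)/2) < γ := by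
    rw [← hvB]
    have : bi K ≤ γ := le_trans hbr hrγ
    rw [hbK] at this
    linarith
  apply gammaC_lt c.hμ hμlt
  rw [hKcast] at hfinal
  exact hfinal

/-- the final packaged interface -/
structure Key (γ μ : ℝ) (g : ℝ → EReal) (v L p : ℝ) : Prop where
  hγ0 : 0 < γ
  hμ : 0 < μ
  hv : 0 < v
  hL0 : L < 0
  hLp : L < p
  hp0 : p ≤ 0
  hbot : ∀ x : ℝ, x ∉ Set.Icc L 0 → g x = ⊥
  gplat : ∀ y : ℝ, p ≤ y → y ≤ 0 → g y = ((-y : ℝ) : EReal)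
  gle : ∀ y : ℝ, g y ≤ ((-y : ℝ) : EReal)
  gstrict : ∀ y y' r r' : ℝ, y < y' → y' ≤ p → g y = ((r:ℝ):EReal) → g y' = ((r':ℝ):EReal) →
    r + y + μ * (y' - y) ≤ r' + y'
  dich : (γ ≤ gammaC μ ∧ p = 0) ∨ (gammaC μ < γ ∧ p < 0)

lemma Ctx.mem_Icc_of_real (c : Ctx γ μ g v L h s) {y r : ℝ} (hr : g y = ((r:ℝ):EReal)) :
    y ∈ Set.Icc L 0 := by
  by_contra hc
  rw [c.hbot y hc] at hr
  exact EReal.coe_ne_bot r hr.symm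

lemma Ctx.gstrict_gen (c : Ctx γ μ g v L h s) {p : ℝ} (hps : p + v ≤ s) :
    ∀ y y' r r' : ℝ, y < y' → y' ≤ p → g y = ((r:ℝ):EReal) → g y' = ((r':ℝ):EReal) →
      r + y + μ * (y' - y) ≤ r' + y' := by
  intro y y' r r' hyy hy'p hgy hgy'
  have hyIcc := c.mem_Icc_of_real hgy
  have hy'Icc := c.mem_Icc_of_real hgy'
  have hry : r = phi γ μ h s (y + v) := by
    have := (c.g_eq_phi hyIcc.1 hyIcc.2).1
    rw [hgy] at this
    exact_mod_cast this
  have hry' : r' = phi γ μ h s (y' + v) := by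
    have := (c.g_eq_phi hy'Icc.1 hy'Icc.2).1
    rw [hgy'] at this
    exact_mod_cast this
  have := c.phi_slope_mu (x := y + v) (x' := y' + v) (by linarith) (by linarith)
  rw [← hry, ← hry'] at this
  linarith

lemma Ctx.mkKey (c : Ctx γ μ g v L h s) (hμne : μ ≠ 1) : ∃ p : ℝ, Key γ μ g v L p := by
  rcases le_or_gt v s with hsv | hsv
  · refine ⟨0, c.hγ0, c.hμ, c.v_pos, c.hLlt, c.hLlt, le_rfl, c.hbot, ?_, c.g_le_neg, ?_, ?_⟩
    · intro y h1 h2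
      have : y = 0 := le_antisymm h2 h1
      subst this
      rw [c.g_zero]
      norm_num
    · exact c.gstrict_gen (by linarith [c.v_pos])
    · exact Or.inl ⟨c.caseA hsv, rfl⟩
  · obtain ⟨hLp, hp0⟩ := c.p_mem hsv
    refine ⟨s - v, c.hγ0, c.hμ, c.v_pos, c.hLlt, hLp, hp0, c.hbot, ?_, c.g_le_neg, ?_, ?_⟩
    · exact c.caseB_plateau hsv
    · exact c.gstrict_gen (by linarith)
    · exact Or.inr ⟨c.caseB hμne hsv, by linarith [c.v_pos]⟩

end Anc


namespace Anc
variable {γ μ v L p : ℝ} {g : ℝ → EReal}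

/-- the argmax set -/
def SS (g : ℝ → EReal) (v x : ℝ) : Set ℝ :=
  {y : ℝ | ∀ z : ℝ, g z - ((|x + v - z| : ℝ) : EReal) ≤ g y - ((|x + v - y| : ℝ) : EReal)}

/-- O1 : structure of the argmax set when x + v > p -/
lemma Key.argmax_struct (k : Key γ μ g v L p) {x : ℝ} (hx : x ∈ Set.Icc L 0)
    (hd : p < x + v) : SS g v x = Set.Icc p (min (x + v) 0) := by
  set d := x + v with hdd
  have hpmd : p ≤ min d 0 := le_min hd.le k.hp0
  have hFval : ∀ y : ℝ, p ≤ y → y ≤ min d 0 →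
      g y - ((|d - y| : ℝ) : EReal) = ((-d : ℝ) : EReal) := by
    intro y h1 h2
    have hy0 : y ≤ 0 := le_trans h2 (min_le_right _ _)
    have hyd : y ≤ d := le_trans h2 (min_le_left _ _)
    rw [k.gplat y h1 hy0, abs_of_nonneg (by linarith : (0:ℝ) ≤ d - y), ← EReal.coe_sub]
    exact_mod_cast congrArg (fun t : ℝ => (t : EReal)) (by ring : -y - (d - y) = -d)
  ext y
  simp only [SS, Set.mem_setOf_eq, Set.mem_Icc]
  constructor
  · intro hy
    -- membership forces y ∈ [p, min d 0]
    have hFp : g p - ((|d - p| : ℝ) : EReal) = ((-d : ℝ) : EReal) := hFval p le_rfl hpmd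
    have hge : ((-d : ℝ) : EReal) ≤ g y - ((|d - y| : ℝ) : EReal) := by
      rw [← hFp]; exact hy p
    -- y is in the support
    have hyIcc : y ∈ Set.Icc L 0 := by
      by_contra hc
      rw [k.hbot y hc] at hge
      rw [show (⊥ : EReal) - ((|d - y| : ℝ) : EReal) = ⊥ from EReal.bot_sub _] at hge
      exact absurd hge (by simp)
    -- real value
    have hne_top : g y ≠ ⊤ := by
      intro hc
      have := k.gle y
      rw [hc] at this
      exact absurd this (by simp)
    have hne_bot : g y ≠ ⊥ := by
      intro hc
      rw [hc] at hge
      rw [show (⊥ : EReal) - ((|d - y| : ℝ) : EReal) = ⊥ from EReal.bot_sub _] at hge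
      exact absurd hge (by simp)
    obtain ⟨r, hr⟩ : ∃ r : ℝ, g y = ((r:ℝ):EReal) :=
      ⟨(g y).toReal, (EReal.coe_toReal hne_top hne_bot).symm⟩
    rw [hr] at hge
    have hrle : r ≤ -y := by
      have := k.gle y
      rw [hr] at this
      exact_mod_cast this
    -- y ≤ min d 0
    have hymd : y ≤ min d 0 := by
      rcases le_or_gt y (min d 0) with hc | hc
      · exact hc
      · exfalso
        have hy0 : y ≤ 0 := hyIcc.2
        have hdy : d < y := by
          rcases le_total d 0 with hd0 | hd0
          · rwa [min_eq_left hd0] at hc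
          · rw [min_eq_right hd0] at hc; linarith
        have h3 : (-d : ℝ) ≤ r - -(d - y) := by
          rw [abs_of_nonpos (by linarith : d - y ≤ 0), ← EReal.coe_sub] at hge
          exact_mod_cast hge
        linarith
    refine ⟨?_, hymd⟩
    -- p ≤ y
    have hyd : y ≤ d := le_trans hymd (min_le_left _ _)
    have hry : r = -y := by
      have h3 : (-d : ℝ) ≤ r - (d - y) := by
        rw [abs_of_nonneg (by linarith : (0:ℝ) ≤ d - y), ← EReal.coe_sub] at hge
        exact_mod_cast hge
      have : -y ≤ r := by linarith
      linarith [hrle]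
    by_contra hc
    push_neg at hc
    have hgp : g p = ((-p : ℝ) : EReal) := k.gplat p le_rfl k.hp0
    have := k.gstrict y p r (-p) hc le_rfl hr hgp
    have hμpos := k.hμ
    nlinarith
  · intro ⟨h1, h2⟩ z
    rw [hFval y h1 h2]
    by_cases hz : z ∈ Set.Icc L 0
    · rcases le_total z d with hzd | hzd
      · refine le_trans (EReal.sub_le_sub (k.gle z) le_rfl) ?_
        rw [abs_of_nonneg (by linarith : (0:ℝ) ≤ d - z), ← EReal.coe_sub]
        exact_mod_cast (by linarith : -z - (d - z) ≤ -d)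
      · refine le_trans (EReal.sub_le_sub (k.gle z) le_rfl) ?_
        rw [abs_of_nonpos (by linarith : d - z ≤ 0), ← EReal.coe_sub]
        have hz0 : z ≤ 0 := hz.2
        rcases le_total d 0 with hd0 | hd0
        · exact_mod_cast (by linarith : -z - -(d - z) ≤ -d)
        · have : z ≤ 0 := hz.2
          exact_mod_cast (by linarith : -z - -(d - z) ≤ -d)
    · rw [k.hbot z hz]
      rw [show (⊥ : EReal) - ((|d - z| : ℝ) : EReal) = ⊥ from EReal.bot_sub _]
      exact bot_le

/-- O2 : when x + v ≤ p every maximiser is in [x+v, 0] ∩ support -/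
lemma Key.argmax_low (k : Key γ μ g v L p) (greal : ∀ y : ℝ, L ≤ y → y ≤ 0 → ∃ r : ℝ, g y = ((r:ℝ):EReal))
    {x y : ℝ} (hx : x ∈ Set.Icc L 0) (hd : x + v ≤ p)
    (hy : y ∈ SS g v x) : y ∈ Set.Icc L 0 ∧ x + v ≤ y := by
  set d := x + v with hdd
  have hdIcc : d ∈ Set.Icc L 0 := by
    constructor
    · have := hx.1; linarith [k.hv]
    · linarith [k.hp0]
  obtain ⟨rd, hrd⟩ := greal d hdIcc.1 hdIcc.2
  -- F d is real
  have hFd : g d - ((|d - d| : ℝ) : EReal) = ((rd : ℝ) : EReal) := by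
    rw [hrd, sub_self, abs_zero, ← EReal.coe_sub]
    norm_num
  have hge : ((rd : ℝ) : EReal) ≤ g y - ((|d - y| : ℝ) : EReal) := by
    rw [← hFd]; exact hy d
  have hyIcc : y ∈ Set.Icc L 0 := by
    by_contra hc
    rw [k.hbot y hc] at hge
    rw [show (⊥ : EReal) - ((|d - y| : ℝ) : EReal) = ⊥ from EReal.bot_sub _] at hge
    exact absurd hge (by simp)
  refine ⟨hyIcc, ?_⟩
  by_contra hc
  push_neg at hc
  obtain ⟨ry, hry⟩ := greal y hyIcc.1 hyIcc.2
  have hstrict := k.gstrict y d ry rd hc hd hry hrd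
  have h2 : ((rd : ℝ) : EReal) ≤ ((ry - (d - y) : ℝ) : EReal) := by
    rw [hry, abs_of_nonneg (by linarith : (0:ℝ) ≤ d - y), ← EReal.coe_sub] at hge
    exact_mod_cast hge
  have h3 : rd ≤ ry - (d - y) := by exact_mod_cast h2
  have hμpos := k.hμ
  nlinarith

/-- the real quadrangle inequality -/
lemma quad {d d' a a' : ℝ} (h1 : d ≤ d') (h2 : a' ≤ a) :
    |d - a'| + |d' - a| ≤ |d - a| + |d' - a'| := by
  rcases abs_cases (d - a') with ⟨e1, f1⟩ | ⟨e1, f1⟩ <;>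
    rcases abs_cases (d' - a) with ⟨e2, f2⟩ | ⟨e2, f2⟩ <;>
    rcases abs_cases (d - a) with ⟨e3, f3⟩ | ⟨e3, f3⟩ <;>
    rcases abs_cases (d' - a') with ⟨e4, f4⟩ | ⟨e4, f4⟩ <;>
    rw [e1, e2, e3, e4] <;> linarith

end Anc


namespace Anc
variable {γ μ v L p : ℝ} {g : ℝ → EReal} {A Ap : ℝ → ℝ}

lemma Key.F_real (k : Key γ μ g v L p) {x y : ℝ} (hy : y ∈ SS g v x) :
    ∃ r : ℝ, g y = ((r:ℝ):EReal) := by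
  have h00 : g 0 = ((0:ℝ) : EReal) := by
    have := k.gplat 0 k.hp0 le_rfl
    simpa using this
  have hge : g 0 - ((|x + v - 0| : ℝ) : EReal) ≤ g y - ((|x + v - y| : ℝ) : EReal) := hy 0
  rw [h00, ← EReal.coe_sub] at hge
  have hne_bot : g y ≠ ⊥ := by
    intro hc
    rw [hc, show (⊥ : EReal) - ((|x + v - y| : ℝ) : EReal) = ⊥ from EReal.bot_sub _] at hge
    exact absurd hge (by simp)
  have hne_top : g y ≠ ⊤ := by
    intro hc
    have := k.gle y
    rw [hc] at this
    exact absurd this (by simp)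
  exact ⟨(g y).toReal, (EReal.coe_toReal hne_top hne_bot).symm⟩

lemma Key.A_mono (k : Key γ μ g v L p)
    (hA : ∀ x ∈ Set.Icc L 0, IsLeast (SS g v x) (A x)) :
    MonotoneOn A (Set.Icc L 0) := by
  intro a ha b hb hab
  by_contra hcon
  push_neg at hcon
  have hAa := hA a ha
  have hAb := hA b hb
  obtain ⟨ra, hra⟩ := k.F_real hAa.1
  obtain ⟨rb, hrb⟩ := k.F_real hAb.1
  have e1 : rb - |a + v - A b| ≤ ra - |a + v - A a| := by
    have := hAa.1 (A b)
    rw [hra, hrb, ← EReal.coe_sub, ← EReal.coe_sub] at this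
    exact_mod_cast this
  have e2 : ra - |b + v - A a| ≤ rb - |b + v - A b| := by
    have := hAb.1 (A a)
    rw [hra, hrb, ← EReal.coe_sub, ← EReal.coe_sub] at this
    exact_mod_cast this
  have hq := quad (d := a + v) (d' := b + v) (a := A a) (a' := A b)
    (by linarith) hcon.le
  have heq : rb - |a + v - A b| = ra - |a + v - A a| := by linarith
  have hmem : A b ∈ SS g v a := by
    intro z
    have h2 := hAa.1 z
    have h3 : g (A a) - ((|a + v - A a| : ℝ) : EReal) = g (A b) - ((|a + v - A b| : ℝ) : EReal) := by
      rw [hra, hrb, ← EReal.coe_sub, ← EReal.coe_sub]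
      exact_mod_cast congrArg (fun t : ℝ => (t : EReal)) heq.symm
    rw [← h3]
    exact h2
  have := hAa.2 hmem
  linarith

lemma Key.Ap_mono (k : Key γ μ g v L p)
    (hAp : ∀ x ∈ Set.Icc L 0, IsGreatest (SS g v x) (Ap x)) :
    MonotoneOn Ap (Set.Icc L 0) := by
  intro a ha b hb hab
  by_contra hcon
  push_neg at hcon
  have hAa := hAp a ha
  have hAb := hAp b hb
  obtain ⟨ra, hra⟩ := k.F_real hAa.1
  obtain ⟨rb, hrb⟩ := k.F_real hAb.1
  have e1 : rb - |a + v - Ap b| ≤ ra - |a + v - Ap a| := by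
    have := hAa.1 (Ap b)
    rw [hra, hrb, ← EReal.coe_sub, ← EReal.coe_sub] at this
    exact_mod_cast this
  have e2 : ra - |b + v - Ap a| ≤ rb - |b + v - Ap b| := by
    have := hAb.1 (Ap a)
    rw [hra, hrb, ← EReal.coe_sub, ← EReal.coe_sub] at this
    exact_mod_cast this
  have hq := quad (d := a + v) (d' := b + v) (a := Ap a) (a' := Ap b)
    (by linarith) hcon.le
  have heq : ra - |b + v - Ap a| = rb - |b + v - Ap b| := by linarith
  have hmem : Ap a ∈ SS g v b := by
    intro z
    have h2 := hAb.1 z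
    have h3 : g (Ap b) - ((|b + v - Ap b| : ℝ) : EReal) = g (Ap a) - ((|b + v - Ap a| : ℝ) : EReal) := by
      rw [hra, hrb, ← EReal.coe_sub, ← EReal.coe_sub]
      exact_mod_cast congrArg (fun t : ℝ => (t : EReal)) heq.symm
    rw [← h3]
    exact h2
  have := hAb.2 hmem
  linarith

lemma Key.A_fix (k : Key γ μ g v L p)
    (hA : ∀ x ∈ Set.Icc L 0, IsLeast (SS g v x) (A x))
    {x : ℝ} (hx : x ∈ Set.Icc L 0) (hd : p < x + v) : A x = p := by
  have hstruct := k.argmax_struct hx hd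
  have hleast : IsLeast (SS g v x) p := by
    rw [hstruct]
    exact ⟨⟨le_rfl, le_min hd.le k.hp0⟩, fun y hy => hy.1⟩
  exact (hA x hx).unique hleast

lemma Key.Ap_fix (k : Key γ μ g v L p)
    (hAp : ∀ x ∈ Set.Icc L 0, IsGreatest (SS g v x) (Ap x))
    {x : ℝ} (hx : x ∈ Set.Icc L 0) (hd : p < x + v) : Ap x = min (x + v) 0 := by
  have hstruct := k.argmax_struct hx hd
  have hgr : IsGreatest (SS g v x) (min (x + v) 0) := by
    rw [hstruct]
    exact ⟨⟨le_min hd.le k.hp0, le_rfl⟩, fun y hy => hy.2⟩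
  exact (hAp x hx).unique hgr

lemma Key.A_orbit (k : Key γ μ g v L p)
    (greal : ∀ y : ℝ, L ≤ y → y ≤ 0 → ∃ r : ℝ, g y = ((r:ℝ):EReal))
    (hA : ∀ x ∈ Set.Icc L 0, IsLeast (SS g v x) (A x))
    {x : ℝ} (hx : x ∈ Set.Icc L 0) : ∃ J : ℕ, ∀ j : ℕ, J ≤ j → A^[j] x = p := by
  have hv := k.hv
  have hpIcc : p ∈ Set.Icc L 0 := ⟨k.hLp.le, k.hp0⟩
  have hApp : A p = p := k.A_fix hA hpIcc (by linarith)
  have hlow : ∀ y ∈ Set.Icc L 0, y + v ≤ p → A y ∈ Set.Icc L 0 ∧ y + v ≤ A y := by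
    intro y hy hd
    exact k.argmax_low greal hy hd (hA y hy).1
  have main : ∀ n : ℕ, A^[n] x ∈ Set.Icc L 0 ∧ (A^[n] x = p ∨ x + (n:ℝ)*v ≤ A^[n] x) := by
    intro n
    induction n with
    | zero => exact ⟨hx, Or.inr (by simp)⟩
    | succ n ih =>
      obtain ⟨hIcc, hor⟩ := ih
      rw [Function.iterate_succ_apply']
      rcases hor with he | hge
      · rw [he, hApp]
        exact ⟨hpIcc, Or.inl rfl⟩
      · rcases le_or_gt (A^[n] x + v) p with hc | hc
        · obtain ⟨h1, h2⟩ := hlow (A^[n] x) hIcc hc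
          refine ⟨h1, Or.inr ?_⟩
          push_cast
          linarith
        · rw [k.A_fix hA hIcc hc]
          exact ⟨hpIcc, Or.inl rfl⟩
  obtain ⟨N, hN⟩ := exists_nat_gt ((p - x)/v)
  rw [div_lt_iff₀ hv] at hN
  have hNx : p < x + (N:ℝ)*v := by linarith
  have hstep : A^[N+1] x = p := by
    obtain ⟨hIcc, hor⟩ := main N
    rw [Function.iterate_succ_apply']
    rcases hor with he | hge
    · rw [he]; exact hApp
    · exact k.A_fix hA hIcc (by linarith)
  refine ⟨N+1, fun j hj => ?_⟩
  induction j, hj using Nat.le_induction with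
  | base => exact hstep
  | succ n hn ih => rw [Function.iterate_succ_apply', ih, hApp]

lemma Key.Ap_orbit (k : Key γ μ g v L p)
    (greal : ∀ y : ℝ, L ≤ y → y ≤ 0 → ∃ r : ℝ, g y = ((r:ℝ):EReal))
    (hA : ∀ x ∈ Set.Icc L 0, IsLeast (SS g v x) (A x))
    (hAp : ∀ x ∈ Set.Icc L 0, IsGreatest (SS g v x) (Ap x))
    {x : ℝ} (hx : x ∈ Set.Icc L 0) : ∃ J : ℕ, ∀ j : ℕ, J ≤ j → Ap^[j] x = 0 := by
  have hv := k.hv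
  have h0Icc : (0:ℝ) ∈ Set.Icc L 0 := ⟨k.hL0.le, le_rfl⟩
  have hAp0 : Ap 0 = 0 := by
    have := k.Ap_fix hAp h0Icc (by linarith [k.hp0])
    rw [this, zero_add, min_eq_right hv.le]
  have hlow : ∀ y ∈ Set.Icc L 0, y + v ≤ p → Ap y ∈ Set.Icc L 0 ∧ y + v ≤ Ap y := by
    intro y hy hd
    exact k.argmax_low greal hy hd (hAp y hy).1
  have main : ∀ n : ℕ, Ap^[n] x ∈ Set.Icc L 0 ∧ (Ap^[n] x = 0 ∨ x + (n:ℝ)*v ≤ Ap^[n] x) := by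
    intro n
    induction n with
    | zero => exact ⟨hx, Or.inr (by simp)⟩
    | succ n ih =>
      obtain ⟨hIcc, hor⟩ := ih
      rw [Function.iterate_succ_apply']
      rcases hor with he | hge
      · rw [he, hAp0]
        exact ⟨h0Icc, Or.inl rfl⟩
      · rcases le_or_gt (Ap^[n] x + v) p with hc | hc
        · obtain ⟨h1, h2⟩ := hlow (Ap^[n] x) hIcc hc
          refine ⟨h1, Or.inr ?_⟩
          push_cast
          linarith
        · rw [k.Ap_fix hAp hIcc hc]
          rcases le_or_gt (Ap^[n] x + v) 0 with hc2 | hc2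
          · rw [min_eq_left hc2]
            refine ⟨⟨by linarith [k.hLp], hc2⟩, Or.inr ?_⟩
            push_cast
            linarith
          · rw [min_eq_right hc2.le]
            exact ⟨h0Icc, Or.inl rfl⟩
  obtain ⟨N, hN⟩ := exists_nat_gt ((0 - x)/v)
  rw [div_lt_iff₀ hv] at hN
  have hNx : 0 < x + (N:ℝ)*v := by linarith
  have hstep : Ap^[N] x = 0 := by
    obtain ⟨hIcc, hor⟩ := main N
    rcases hor with he | hge
    · exact he
    · exfalso
      have := hIcc.2
      linarith
  refine ⟨N, fun j hj => ?_⟩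
  induction j, hj using Nat.le_induction with
  | base => exact hstep
  | succ n hn ih => rw [Function.iterate_succ_apply', ih, hAp0]

end Anc


/-- the ancestral maps `A` and `A⁺` are non-decreasing on
`[L,0]`; if `γ ≤ γ_c` their iterates reach `0` after finitely many steps,
while if `γ > γ_c` there is `c₁ > 0` with `A^j(x) = −c₁` and `(A⁺)^j(x) = 0`
for all large `j`. -/
theorem ancestral_map_iterates (γ μ : ℝ) (hγ : γ ∈ Set.Ioo (0 : ℝ) 1)
    (hμ : 0 < μ) (hμ1 : μ ≠ 1)
    (g : ℝ → EReal) (v L : ℝ) (hg : IsTravelingWave γ μ g v L)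
    (A Ap : ℝ → ℝ)
    (hA : ∀ x ∈ Set.Icc L 0, IsLeast
      {y : ℝ | ∀ z : ℝ, g z - ((|x + v - z| : ℝ) : EReal) ≤
        g y - ((|x + v - y| : ℝ) : EReal)} (A x))
    (hAp : ∀ x ∈ Set.Icc L 0, IsGreatest
      {y : ℝ | ∀ z : ℝ, g z - ((|x + v - z| : ℝ) : EReal) ≤
        g y - ((|x + v - y| : ℝ) : EReal)} (Ap x)) :
    MonotoneOn A (Set.Icc L 0) ∧ MonotoneOn Ap (Set.Icc L 0) ∧
    ∀ x ∈ Set.Icc L 0,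
      (γ ≤ gammaC μ → ∃ J : ℕ, ∀ j : ℕ, J ≤ j →
        A^[j] x = 0 ∧ Ap^[j] x = 0) ∧
      (gammaC μ < γ → ∃ c₁ : ℝ, 0 < c₁ ∧ ∃ J : ℕ, ∀ j : ℕ, J ≤ j →
        A^[j] x = -c₁ ∧ Ap^[j] x = 0) := by
  obtain ⟨h, s, c⟩ := Anc.mkCtx hγ hμ hg
  obtain ⟨p, k⟩ := c.mkKey hμ1
  have greal : ∀ y : ℝ, L ≤ y → y ≤ 0 → ∃ r : ℝ, g y = ((r:ℝ):EReal) := by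
    intro y h1 h2
    exact ⟨_, (c.g_eq_phi h1 h2).1⟩
  have hA' : ∀ x ∈ Set.Icc L 0, IsLeast (Anc.SS g v x) (A x) := hA
  have hAp' : ∀ x ∈ Set.Icc L 0, IsGreatest (Anc.SS g v x) (Ap x) := hAp
  refine ⟨k.A_mono hA', k.Ap_mono hAp', ?_⟩
  intro x hx
  obtain ⟨J1, hJ1⟩ := k.A_orbit greal hA' hx
  obtain ⟨J2, hJ2⟩ := k.Ap_orbit greal hA' hAp' hx
  constructor
  · intro hγc
    rcases k.dich with ⟨_, hp0⟩ | ⟨hgt, _⟩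
    · refine ⟨max J1 J2, fun j hj => ⟨?_, ?_⟩⟩
      · rw [hJ1 j (le_trans (le_max_left _ _) hj), hp0]
      · exact hJ2 j (le_trans (le_max_right _ _) hj)
    · exact absurd hγc (not_le.2 hgt)
  · intro hγc
    rcases k.dich with ⟨hle, _⟩ | ⟨_, hplt⟩
    · exact absurd hγc (not_lt.2 hle)
    · refine ⟨-p, by linarith, max J1 J2, fun j hj => ⟨?_, ?_⟩⟩
      · rw [hJ1 j (le_trans (le_max_left _ _) hj), neg_neg]
      · exact hJ2 j (le_trans (le_max_right _ _) hj)
end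

section
/- Fix γ ∈ (0,1) and μ > 0 with μ ≠ 1, and set k := ⌊1/μ⌋ and γ_c(μ) := (k/(k+1))·(1 − μ/(2 − kμ)). Let g be the concave traveling wave with speed v, support [L,0] and phenotypic threshold s. Define the reproduction profile r(x) = π[ 1 − γ + sup_{y∈ℝ} ( g(y) − |x − y| ) ] and let g_1(x) = g(x − v) be the genotypic profile after one step of the dynamic. Then: if γ < γ_c(μ), one has r(x) > g_1(x) for every x in the support of g_1 (i.e. for every x with g_1(x) ≥ 0); and if γ > γ_c(μ), one has r(x) = g_1(x) for every x ∈ [s, v], an interval containing the right edge v of the support of g_1. -/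
/-- The reproduction profile `r(x) = π[ 1 − γ + sup_y ( g(y) − |x − y| ) ]`. -/
noncomputable def reprofile (γ : ℝ) (g : ℝ → EReal) (x : ℝ) : EReal :=
  piE (((1 - γ : ℝ) : EReal) + ⨆ y : ℝ, g y - ((|x - y| : ℝ) : EReal))

lemma piE_le (t : EReal) : piE t ≤ t := by
  unfold piE; split
  · exact le_refl t
  · exact bot_le
lemma piE_of_nonneg {t : EReal} (h : 0 ≤ t) : piE t = t := if_pos h
lemma nonneg_of_piE {t : EReal} (h : 0 ≤ piE t) : 0 ≤ t := by
  by_contra hc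
  rw [piE, if_neg hc] at h
  exact (not_le.mpr (bot_lt_iff_ne_bot.mpr (by simp))) h
lemma piE_ge_of_le {t : EReal} {b : ℝ} (hb : 0 ≤ b) (h : (b:EReal) ≤ t) : (b:EReal) ≤ piE t := by
  rw [piE_of_nonneg (le_trans (by exact_mod_cast hb) h)]; exact h
lemma Phi_le {γ μ : ℝ} {g : ℝ → EReal} {ξ x a p : ℝ}
    (h1 : (⨆ y : ℝ, g y - ((|x - y| : ℝ) : EReal)) ≤ ((a : ℝ) : EReal))
    (h2 : p ≤ μ * max (ξ - x) 0) :
    Phi γ μ g ξ x ≤ ((1 - γ + a - p : ℝ) : EReal) := by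
  unfold Phi
  rw [sub_eq_add_neg _ ((μ * max (ξ - x) 0 : ℝ) : EReal), ← EReal.coe_neg]
  calc ((1 - γ : ℝ) : EReal) + _ + ((-(μ * max (ξ - x) 0) : ℝ) : EReal)
      ≤ ((1 - γ : ℝ) : EReal) + ((a : ℝ) : EReal) + ((-p : ℝ) : EReal) := by
        apply add_le_add (add_le_add_right h1 _)
        exact_mod_cast neg_le_neg h2
    _ = ((1 - γ + a - p : ℝ) : EReal) := by norm_cast
lemma Phi_ge {γ μ : ℝ} {g : ℝ → EReal} {ξ x b q : ℝ}
    (h1 : ((b : ℝ) : EReal) ≤ (⨆ y : ℝ, g y - ((|x - y| : ℝ) : EReal)))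
    (h2 : μ * max (ξ - x) 0 ≤ q) :
    ((1 - γ + b - q : ℝ) : EReal) ≤ Phi γ μ g ξ x := by
  unfold Phi
  rw [sub_eq_add_neg _ ((μ * max (ξ - x) 0 : ℝ) : EReal), ← EReal.coe_neg]
  calc ((1 - γ + b - q : ℝ) : EReal)
      = ((1 - γ : ℝ) : EReal) + ((b : ℝ) : EReal) + ((-q : ℝ) : EReal) := by norm_cast
    _ ≤ _ := by
        apply add_le_add (add_le_add_right h1 _)
        exact_mod_cast neg_le_neg h2
lemma le_hfun (g : ℝ → EReal) (x : ℝ) : g x ≤ ⨆ y : ℝ, g y - ((|x - y| : ℝ) : EReal) := by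
  apply le_iSup_of_le x
  simp
lemma wave_one {γ μ : ℝ} {g : ℝ → EReal} {v L : ℝ} (hg : IsTravelingWave γ μ g v L) :
    ∀ x : ℝ, piE (Phi γ μ g (sNext γ μ g) x) = g (x - v) := by
  intro x
  have h := hg.2.2.2.2.2.2 1 (le_refl 1) x
  simpa [gIter] using h
lemma Phi_no_pen (γ μ : ℝ) (g : ℝ → EReal) {ξ x : ℝ} (hx : ξ ≤ x) :
    Phi γ μ g ξ x = ((1 - γ : ℝ) : EReal) + (⨆ y : ℝ, g y - ((|x - y| : ℝ) : EReal)) := by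
  unfold Phi
  rw [max_eq_right (by linarith), mul_zero]
  simp

-- C is not ⊤
lemma C_facts {γ μ : ℝ} {g : ℝ → EReal} {v L : ℝ} (hγ : γ ∈ Set.Ioo (0:ℝ) 1)
    (hg : IsTravelingWave γ μ g v L) :
    (⨆ y : ℝ, g y + ((y:ℝ):EReal)) ≠ ⊤ ∧ (⨆ y : ℝ, g y + ((y:ℝ):EReal)) ≠ ⊥ := by
  set C := ⨆ y : ℝ, g y + ((y:ℝ):EReal) with hCdef
  have hsupp := hg.2.2.2.2.2.1
  constructor
  · intro htop
    set x := max v 0 + 1 with hx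
    have hfun_top : (⨆ y : ℝ, g y - ((|x - y| : ℝ) : EReal)) = ⊤ := by
      rw [iSup_eq_top]
      intro b hb
      rcases EReal.exists_between_coe_real hb with ⟨r, hr1, hr2⟩
      have h1 : ((r + x : ℝ) : EReal) < C := by rw [htop]; exact EReal.coe_lt_top _
      rw [hCdef, lt_iSup_iff] at h1
      obtain ⟨y, hy⟩ := h1
      have hgy : g y ≠ ⊥ := by
        intro hb'
        rw [hb'] at hy
        simp at hy
      have hyI : y ∈ Set.Icc L 0 := by
        by_contra hc
        exact hgy (hsupp y hc)
      have hxy : |x - y| = x - y := abs_of_nonneg (by nlinarith [hyI.2, le_max_right v 0])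
      refine ⟨y, lt_of_lt_of_le hr1 ?_⟩
      have : ((r:ℝ):EReal) + ((x:ℝ):EReal) ≤ g y + ((y:ℝ):EReal) := by
        rw [← EReal.coe_add]; exact le_of_lt hy
      have h2 : ((r:ℝ):EReal) + ((x:ℝ):EReal) + ((-x:ℝ):EReal) ≤ g y + ((y:ℝ):EReal) + ((-x:ℝ):EReal) :=
        add_le_add_left this _
      have h3 : ((r:ℝ):EReal) + ((x:ℝ):EReal) + ((-x:ℝ):EReal) = ((r:ℝ):EReal) := by
        rw [add_assoc, ← EReal.coe_add]; simp
      have h4 : g y + ((y:ℝ):EReal) + ((-x:ℝ):EReal) = g y - ((|x - y| : ℝ):EReal) := by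
        rw [add_assoc, ← EReal.coe_add, sub_eq_add_neg _ ((|x-y|:ℝ):EReal), ← EReal.coe_neg, hxy]
        norm_num
        rw [sub_eq_add_neg]
      rwa [h3, h4] at h2
    have hw := wave_one hg x
    rw [Phi, hfun_top] at hw
    have : piE (((1 - γ:ℝ):EReal) + ⊤ - ((μ * max (sNext γ μ g - x) 0 : ℝ):EReal)) = ⊤ := by
      rw [EReal.coe_add_top, EReal.top_sub_coe, piE_of_nonneg le_top]
    rw [this] at hw
    have hxv : x - v ∉ Set.Icc L 0 := by
        intro hc
        have := hc.2
        have : v ≤ max v 0 := le_max_left v 0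
        linarith [hc.2]
    rw [hsupp _ hxv] at hw
    exact absurd hw.symm bot_ne_top
  · obtain ⟨y₀, hy₀⟩ := hg.2.1
    intro hbot
    have h1 : g y₀ + ((y₀:ℝ):EReal) ≤ C := le_iSup (fun y : ℝ => g y + ((y:ℝ):EReal)) y₀
    rw [hbot, le_bot_iff, EReal.add_eq_bot_iff] at h1
    rcases h1 with h | h
    · simp only [Set.mem_setOf_eq, h] at hy₀; exact absurd hy₀ (by simp)
    · exact (EReal.coe_ne_bot _) h

section Bounds
variable {γ μ : ℝ} {g : ℝ → EReal} {v L c : ℝ}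

lemma sub_coe_mono {X : EReal} {a b : ℝ} (h : a ≤ b) : X - ((b:ℝ):EReal) ≤ X - ((a:ℝ):EReal) := by
  apply add_le_add_right
  rw [← EReal.coe_neg, ← EReal.coe_neg]
  exact_mod_cast neg_le_neg h

lemma hfun_le_one (hc : ∀ y : ℝ, g y + ((y:ℝ):EReal) ≤ ((c:ℝ):EReal)) (x : ℝ) :
    (⨆ y : ℝ, g y - ((|x - y| : ℝ) : EReal)) ≤ ((c - x : ℝ) : EReal) := by
  apply iSup_le
  intro y
  have h1 : g y - ((|x - y| : ℝ) : EReal) = (g y + ((y:ℝ):EReal)) + ((-y - |x - y| : ℝ):EReal) := by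
    have h0 : (y + (-y - |x - y|)) = -|x - y| := by ring
    rw [add_assoc, ← EReal.coe_add, h0, sub_eq_add_neg _ ((|x-y|:ℝ):EReal), ← EReal.coe_neg]
  rw [h1]
  calc (g y + ((y:ℝ):EReal)) + ((-y - |x - y| : ℝ):EReal)
      ≤ ((c:ℝ):EReal) + ((-y - |x - y| : ℝ):EReal) := add_le_add_left (hc y) _
    _ = ((c - y - |x - y| : ℝ):EReal) := by norm_cast; ring
    _ ≤ ((c - x : ℝ) : EReal) := by
        apply EReal.coe_le_coe_iff.mpr
        have := abs_nonneg (x - y)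
        have := le_abs_self (x - y)
        linarith

lemma hfun_le_two (hc : ∀ y : ℝ, g y + ((y:ℝ):EReal) ≤ ((c:ℝ):EReal))
    (hsupp : ∀ x : ℝ, x ∉ Set.Icc L 0 → g x = ⊥) (x : ℝ) :
    (⨆ y : ℝ, g y - ((|x - y| : ℝ) : EReal)) ≤ ((c - L : ℝ) : EReal) := by
  apply iSup_le
  intro y
  by_cases hy : y ∈ Set.Icc L 0
  · have h2 : g y ≤ ((c - y : ℝ):EReal) := by
      have := hc y
      have h3 : g y + ((y:ℝ):EReal) + ((-y:ℝ):EReal) ≤ ((c:ℝ):EReal) + ((-y:ℝ):EReal) :=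
        add_le_add_left this _
      rw [add_assoc, ← EReal.coe_add] at h3
      simpa [sub_eq_add_neg] using h3
    calc g y - ((|x - y| : ℝ) : EReal) ≤ g y - ((0:ℝ):EReal) := sub_coe_mono (abs_nonneg _)
      _ = g y := by simp
      _ ≤ ((c - y : ℝ):EReal) := h2
      _ ≤ ((c - L : ℝ):EReal) := by exact_mod_cast (by linarith [hy.1] : c - y ≤ c - L)
  · rw [hsupp y hy]
    simp [sub_eq_add_neg]

end Bounds

section Threshold
variable {γ μ : ℝ} {g : ℝ → EReal} {v L c : ℝ}

lemma Phi_bound_right (hγ1 : γ < 1) (hμ : 0 < μ) (hμ1 : μ ≤ 1)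
    (hc : ∀ y : ℝ, g y + ((y:ℝ):EReal) ≤ ((c:ℝ):EReal))
    (hsupp : ∀ x : ℝ, x ∉ Set.Icc L 0 → g x = ⊥) (hL0 : L ≤ 0)
    {ξ : ℝ} (hξ : 0 ≤ ξ) (x : ℝ) :
    Phi γ μ g ξ x ≤ ((1 - γ + (c - L) - μ * ξ : ℝ) : EReal) := by
  rcases le_or_gt x 0 with hx | hx
  · exact Phi_le (hfun_le_two hc hsupp x) (by nlinarith [le_max_left (ξ - x) 0])
  · rcases le_or_gt x ξ with hxξ | hxξ
    · refine le_trans (Phi_le (a := c - x) (p := μ*(ξ - x)) (hfun_le_one hc x)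
        (le_of_eq (by rw [max_eq_left (by linarith)]))) ?_
      apply EReal.coe_le_coe_iff.mpr
      nlinarith
    · refine le_trans (Phi_le (hfun_le_one hc x) (by positivity)) ?_
      apply EReal.coe_le_coe_iff.mpr
      nlinarith

lemma F_sNext_le (hγ0 : 0 < γ) (hγ1 : γ < 1) (hμ : 0 < μ) (hμ1 : μ ≤ 1)
    (hc : ∀ y : ℝ, g y + ((y:ℝ):EReal) ≤ ((c:ℝ):EReal))
    (hsupp : ∀ x : ℝ, x ∉ Set.Icc L 0 → g x = ⊥) (hL0 : L ≤ 0) :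
    (⨆ x : ℝ, Phi γ μ g (sNext γ μ g) x) ≤ ((γ:ℝ):EReal) := by
  set S := {ξ : ℝ | (γ : EReal) ≤ ⨆ x : ℝ, Phi γ μ g ξ x} with hS
  have hnotin : ∀ ξ : ℝ, max ((1 - 2*γ + c - L)/μ) 0 < ξ → ξ ∉ S := by
    intro ξ hξ hmem
    have hξ0 : 0 ≤ ξ := le_of_lt (lt_of_le_of_lt (le_max_right _ _) hξ)
    have hb : (⨆ x : ℝ, Phi γ μ g ξ x) ≤ ((1 - γ + (c - L) - μ * ξ : ℝ) : EReal) :=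
      iSup_le (Phi_bound_right hγ1 hμ hμ1 hc hsupp hL0 hξ0)
    have hlt : 1 - γ + (c - L) - μ * ξ < γ := by
      have h1 : (1 - 2*γ + c - L)/μ < ξ := lt_of_le_of_lt (le_max_left _ _) hξ
      have h2 : 1 - 2*γ + c - L < μ * ξ := by
        rw [div_lt_iff₀ hμ] at h1
        linarith [h1]
      linarith
    have := le_trans hmem hb
    rw [EReal.coe_le_coe_iff] at this
    linarith
  have hSb : BddAbove S := by
    refine ⟨max ((1 - 2*γ + c - L)/μ) 0, fun ξ hξ => ?_⟩
    by_contra hcon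
    exact hnotin ξ (not_le.mp hcon) hξ
  have hLip : ∀ δ : ℝ, 0 < δ →
      (⨆ x : ℝ, Phi γ μ g (sNext γ μ g) x) ≤ (⨆ x : ℝ, Phi γ μ g (sNext γ μ g + δ) x) + ((μ*δ:ℝ):EReal) := by
    intro δ hδ
    apply iSup_le
    intro x
    have key : Phi γ μ g (sNext γ μ g) x ≤ Phi γ μ g (sNext γ μ g + δ) x + ((μ*δ:ℝ):EReal) := by
      unfold Phi
      set K := ((1 - γ : ℝ) : EReal) + (⨆ y : ℝ, g y - ((|x - y| : ℝ) : EReal)) with hK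
      set p' := μ * max (sNext γ μ g + δ - x) 0 with hp'
      have h1 : K - ((μ * max (sNext γ μ g - x) 0 : ℝ):EReal) ≤ K - (((p' - μ*δ) : ℝ):EReal) := by
        apply sub_coe_mono
        have : max (sNext γ μ g + δ - x) 0 ≤ max (sNext γ μ g - x) 0 + δ := by
          apply max_le
          · have := le_max_left (sNext γ μ g - x) 0
            linarith
          · have := le_max_right (sNext γ μ g - x) 0
            linarith
        nlinarith
      refine le_trans h1 (le_of_eq ?_)
      have h0 : (-(p' - μ*δ)) = -p' + μ*δ := by ring
      rw [sub_eq_add_neg _ (((p' - μ*δ):ℝ):EReal), ← EReal.coe_neg, h0, EReal.coe_add,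
        ← add_assoc, sub_eq_add_neg _ ((p':ℝ):EReal), ← EReal.coe_neg]
    exact le_trans key (add_le_add_left (le_iSup (fun x => Phi γ μ g (sNext γ μ g + δ) x) x) _)
  rcases Set.eq_empty_or_nonempty S with hemp | hne
  · have h0 : sNext γ μ g = 0 := by
      rw [sNext, ← hS, hemp, Real.sSup_empty]
    have : (0:ℝ) ∉ S := by rw [hemp]; exact Set.notMem_empty 0
    rw [hS, Set.mem_setOf_eq, not_le] at this
    rw [h0]
    exact le_of_lt this
  · have hub : ∀ δ : ℝ, 0 < δ → ((γ:ℝ):EReal) ≤ (⨆ x : ℝ, Phi γ μ g (sNext γ μ g + δ) x) → False := by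
      intro δ hδ hmem
      have : sNext γ μ g + δ ∈ S := hmem
      have := le_csSup hSb this
      rw [sNext, ← hS] at this
      -- this : sNext + δ ≤ sSup S = sNext
      linarith [this]
    by_contra hcon
    rw [not_le] at hcon
    have hne_top : (⨆ x : ℝ, Phi γ μ g (sNext γ μ g) x) ≠ ⊤ := by
      intro htop
      have := hLip 1 one_pos
      rw [htop, top_le_iff] at this
      have h2 : (⨆ x : ℝ, Phi γ μ g (sNext γ μ g + 1) x) ≤ ((γ:ℝ):EReal) := by
        by_contra hc2
        exact hub 1 one_pos (le_of_lt (not_le.mp hc2))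
      have : ((γ:ℝ):EReal) + ((μ*1:ℝ):EReal) = ⊤ := by
        apply top_le_iff.mp
        rw [← this]
        exact add_le_add_left h2 _
      rw [← EReal.coe_add] at this
      exact EReal.coe_ne_top _ this
    have hne_bot : (⨆ x : ℝ, Phi γ μ g (sNext γ μ g) x) ≠ ⊥ :=
      fun hb => by rw [hb] at hcon; exact absurd hcon (by simp)
    set r := (⨆ x : ℝ, Phi γ μ g (sNext γ μ g) x).toReal with hr
    have hrr : (⨆ x : ℝ, Phi γ μ g (sNext γ μ g) x) = ((r:ℝ):EReal) := (EReal.coe_toReal hne_top hne_bot).symm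
    have hγr : γ < r := by
      rw [hrr, EReal.coe_lt_coe_iff] at hcon
      exact hcon
    set δ := (r - γ)/(2*μ) with hδdef
    have hδ : 0 < δ := div_pos (by linarith) (by linarith)
    have h2 : (⨆ x : ℝ, Phi γ μ g (sNext γ μ g + δ) x) ≤ ((γ:ℝ):EReal) := by
      by_contra hc2
      exact hub δ hδ (le_of_lt (not_le.mp hc2))
    have h3 := le_trans (hLip δ hδ) (add_le_add_left h2 _)
    rw [hrr, ← EReal.coe_add, EReal.coe_le_coe_iff] at h3
    have : μ * δ = (r - γ)/2 := by
      rw [hδdef, mul_div_assoc', div_eq_div_iff (ne_of_gt (by linarith)) two_ne_zero]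
      ring
    rw [this] at h3
    linarith

end Threshold

section Speed
variable {γ μ : ℝ} {g : ℝ → EReal} {v L c : ℝ}

lemma g_le_Phi (hg : IsTravelingWave γ μ g v L) (z : ℝ) :
    g z ≤ Phi γ μ g (sNext γ μ g) (z + v) := by
  have hw := wave_one hg (z + v)
  rw [show z + v - v = z by ring] at hw
  rw [← hw]
  exact piE_le _

lemma g_le_gamma (hg : IsTravelingWave γ μ g v L)
    (hF : (⨆ x : ℝ, Phi γ μ g (sNext γ μ g) x) ≤ ((γ:ℝ):EReal)) (z : ℝ) :
    g z ≤ ((γ:ℝ):EReal) :=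
  le_trans (g_le_Phi hg z) (le_trans (le_iSup (fun x => Phi γ μ g (sNext γ μ g) x) (z + v)) hF)

lemma v_le (hμ : 0 < μ) (hg : IsTravelingWave γ μ g v L)
    (hc : ∀ y : ℝ, g y + ((y:ℝ):EReal) ≤ ((c:ℝ):EReal))
    (hCc : (⨆ y : ℝ, g y + ((y:ℝ):EReal)) = ((c:ℝ):EReal)) :
    v ≤ 1 - γ := by
  have key : ∀ z : ℝ, g z + ((z:ℝ):EReal) ≤ ((1 - γ + c - v : ℝ):EReal) := by
    intro z
    have h1 : g z ≤ ((1 - γ + (c - (z + v)) - 0 : ℝ):EReal) :=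
      le_trans (g_le_Phi hg z) (Phi_le (hfun_le_one hc (z+v))
        (mul_nonneg (le_of_lt hμ) (le_max_right _ _)))
    calc g z + ((z:ℝ):EReal) ≤ ((1 - γ + (c - (z + v)) - 0 : ℝ):EReal) + ((z:ℝ):EReal) :=
          add_le_add_left h1 _
      _ = ((1 - γ + (c - (z + v)) - 0 + z : ℝ):EReal) := by rw [← EReal.coe_add]
      _ = ((1 - γ + c - v : ℝ):EReal) := EReal.coe_eq_coe_iff.mpr (by ring)
  have h2 : (⨆ y : ℝ, g y + ((y:ℝ):EReal)) ≤ ((1 - γ + c - v : ℝ):EReal) := iSup_le key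
  rw [hCc, EReal.coe_le_coe_iff] at h2
  linarith

lemma v_pos (hγ1 : γ < 1) (hg : IsTravelingWave γ μ g v L)
    (hsv : sNext γ μ g ≤ v) : 0 < v := by
  by_contra hv
  rw [not_lt] at hv
  have hsupp := hg.2.2.2.2.2.1
  have hne := hg.2.1
  have hsSup := hg.2.2.2.1
  obtain ⟨y₁, hy₁P, hy₁⟩ : ∃ y₁ ∈ {x : ℝ | 0 < g x}, -((1-γ)/4) < y₁ := by
    by_contra hcon
    push_neg at hcon
    have := csSup_le hne (fun a ha => hcon a ha)
    rw [hsSup] at this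
    linarith
  simp only [Set.mem_setOf_eq] at hy₁P
  have hy₁I : y₁ ∈ Set.Icc L 0 := by
    by_contra hcc
    rw [hsupp _ hcc] at hy₁P
    exact absurd hy₁P (by simp)
  set x' := (1-γ)/2 with hx'
  have habs : |x' - y₁| ≤ 3*(1-γ)/4 := by
    rw [abs_of_nonneg (by nlinarith [hy₁I.2] : (0:ℝ) ≤ x' - y₁)]
    have := hy₁I.2
    nlinarith
  have hfx : ((-(3*(1-γ)/4) : ℝ):EReal) ≤ ⨆ y : ℝ, g y - ((|x' - y| : ℝ) : EReal) := by
    apply le_iSup_of_le y₁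
    calc ((-(3*(1-γ)/4) : ℝ):EReal) ≤ ((-|x' - y₁| : ℝ):EReal) := by
          exact_mod_cast neg_le_neg habs
      _ = ((0:ℝ):EReal) - ((|x' - y₁|:ℝ):EReal) := by
          rw [← EReal.coe_sub]
          norm_num
      _ ≤ g y₁ - ((|x' - y₁|:ℝ):EReal) := by
          rw [sub_eq_add_neg, sub_eq_add_neg]
          exact add_le_add_left (by exact_mod_cast le_of_lt hy₁P) _
  have hpen : μ * max (sNext γ μ g - x') 0 ≤ 0 := by
    rw [max_eq_right (by nlinarith : sNext γ μ g - x' ≤ 0), mul_zero]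
  have hPhi := Phi_ge (γ := γ) hfx hpen
  have hval : (0:ℝ) ≤ 1 - γ + (-(3*(1-γ)/4)) - 0 := by linarith
  have hge := piE_ge_of_le hval hPhi
  rw [wave_one hg x'] at hge
  have hout : x' - v ∉ Set.Icc L 0 := by
    intro hmem
    have := hmem.2
    nlinarith
  rw [hsupp _ hout] at hge
  rw [le_bot_iff] at hge
  exact EReal.coe_ne_bot _ hge

end Speed

section Arith

lemma kFl_facts {μ : ℝ} (hμ : 0 < μ) (hμ1 : μ < 1) :
    1 ≤ ((kFl μ : ℤ):ℝ) ∧ ((kFl μ : ℤ):ℝ) * μ ≤ 1 := by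
  have h1 : (1:ℝ) ≤ 1/μ := by
    rw [le_div_iff₀ hμ]
    linarith
  constructor
  · have : (1:ℤ) ≤ ⌊1/μ⌋ := Int.le_floor.mpr (by exact_mod_cast h1)
    exact_mod_cast this
  · have h2 : ((⌊1/μ⌋ : ℤ):ℝ) ≤ 1/μ := Int.floor_le _
    rw [kFl]
    calc ((⌊1/μ⌋ : ℤ):ℝ) * μ ≤ (1/μ) * μ := by nlinarith
      _ = 1 := by field_simp

lemma gammaC_zero {μ : ℝ} (hμ : 0 < μ) (hμ1 : 1 < μ) : gammaC μ = 0 := by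
  have : kFl μ = 0 := by
    rw [kFl, Int.floor_eq_zero_iff]
    constructor
    · positivity
    · rw [div_lt_one hμ]; exact hμ1
  rw [gammaC, this]
  norm_num

lemma gamma_lt_arith {γ μ : ℝ} (hμ : 0 < μ) (hμ1 : μ < 1) (hγ0 : 0 < γ) (hγ1 : γ < 1)
    (h : γ < gammaC μ) :
    γ < (1-γ) * (((kFl μ : ℤ):ℝ) * (2 - (((kFl μ : ℤ):ℝ)+1)*μ)/2) ∧
    0 < (2 - (((kFl μ : ℤ):ℝ)+1)*μ) := by
  obtain ⟨hk1, hkμ⟩ := kFl_facts hμ hμ1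
  set k := ((kFl μ : ℤ):ℝ) with hk
  set A := k * (2 - (k+1)*μ)/2 with hA
  have h2 : 0 < 2 - (k+1)*μ := by nlinarith
  have hApos : 0 < A := by
    rw [hA]; positivity
  have hden : (2 - k*μ) > 0 := by nlinarith
  have he1 : k + 1 ≠ 0 := by positivity
  have he2 : 2 - k*μ ≠ 0 := ne_of_gt hden
  have he3 : 1 + A ≠ 0 := by positivity
  have he3' : 1 + k * (2 - (k + 1) * μ) / 2 ≠ 0 := by positivity
  have hgc : gammaC μ = A / (1+A) := by
    rw [gammaC, ← hk, hA]
    field_simp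
    ring
  rw [hgc] at h
  have h3 : γ * (1+A) < A := (lt_div_iff₀ (by positivity)).mp h
  refine ⟨?_, h2⟩
  nlinarith

end Arith


section Main
variable {γ μ : ℝ} {g : ℝ → EReal} {v L : ℝ}

set_option maxHeartbeats 1000000 in
lemma fittest_implies (hγ : γ ∈ Set.Ioo (0:ℝ) 1) (hμ : 0 < μ) (hμ1 : μ ≠ 1)
    (hg : IsTravelingWave γ μ g v L) (hsv : sNext γ μ g ≤ v) :
    gammaC μ ≤ γ := by
  by_contra hcon
  rw [not_le] at hcon
  rcases lt_or_gt_of_ne hμ1 with hμlt | hμgt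
  swap
  · rw [gammaC_zero hμ hμgt] at hcon
    exact absurd hcon (not_lt.mpr (le_of_lt hγ.1))
  -- now μ < 1
  obtain ⟨hCt, hCb⟩ := C_facts hγ hg
  obtain ⟨c, hCc⟩ : ∃ c : ℝ, (⨆ y : ℝ, g y + ((y:ℝ):EReal)) = ((c:ℝ):EReal) :=
    ⟨_, (EReal.coe_toReal hCt hCb).symm⟩
  have hc : ∀ y : ℝ, g y + ((y:ℝ):EReal) ≤ ((c:ℝ):EReal) := by
    intro y
    rw [← hCc]
    exact le_iSup (fun y : ℝ => g y + ((y:ℝ):EReal)) y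
  have hsupp := hg.2.2.2.2.2.1
  have hne := hg.2.1
  have hL0 : L ≤ 0 := by
    have hba : BddAbove {x : ℝ | 0 < g x} := by
      refine ⟨0, fun a ha => ?_⟩
      simp only [Set.mem_setOf_eq] at ha
      by_contra hc'
      rw [hsupp a (fun hm => hc' hm.2)] at ha
      exact absurd ha (by simp)
    have := csInf_le_csSup hne hg.2.2.1 hba
    rw [hg.2.2.2.1, hg.2.2.2.2.1] at this
    exact this
  have hF := F_sNext_le hγ.1 hγ.2 hμ (le_of_lt hμlt) hc hsupp hL0
  have hvle := v_le hμ hg hc hCc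
  have hvpos := v_pos hγ.2 hg hsv
  obtain ⟨harith, h2kμ⟩ := gamma_lt_arith hμ hμlt hγ.1 hγ.2 hcon
  obtain ⟨hk1, hkμ⟩ := kFl_facts hμ hμlt
  obtain ⟨k, hkdef⟩ : ∃ k : ℝ, k = ((kFl μ : ℤ):ℝ) := ⟨_, rfl⟩
  rw [← hkdef] at harith h2kμ hk1 hkμ
  obtain ⟨A, hA⟩ : ∃ A : ℝ, A = k * (2 - (k+1)*μ)/2 := ⟨_, rfl⟩
  rw [← hA] at harith
  have h1γ : (0:ℝ) < 1 - γ := by linarith [hγ.2]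
  have hApos : 0 < A := by
    have := mul_le_mul_of_nonneg_right hk1 (le_of_lt h2kμ)
    rw [hA]; linarith
  obtain ⟨D, hD⟩ : ∃ D : ℝ, D = (1-γ) * (2 - (k+1)*μ)/2 := ⟨_, rfl⟩
  have hDpos : 0 < D := by
    rw [hD]
    have := mul_pos h1γ h2kμ
    linarith
  obtain ⟨ρ, hρ⟩ : ∃ ρ : ℝ, ρ = (1-γ)*A - γ := ⟨_, rfl⟩
  have hρpos : 0 < ρ := by rw [hρ]; linarith [harith]
  have hkμpos : 0 < k*μ := by nlinarith
  obtain ⟨ε, hε⟩ : ∃ ε : ℝ, ε = min D ρ / (2*(k*μ)) := ⟨_, rfl⟩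
  have hεpos : 0 < ε := by
    rw [hε]
    exact div_pos (lt_min hDpos hρpos) (by linarith)
  have hkμε : k*μ*ε = min D ρ / 2 := by
    rw [hε]
    field_simp
  -- starting point
  obtain ⟨z₀, hz₀P, hz₀⟩ : ∃ z₀ ∈ {x : ℝ | 0 < g x}, -ε < z₀ := by
    by_contra hcon2
    push_neg at hcon2
    have := csSup_le hne (fun a ha => hcon2 a ha)
    rw [hg.2.2.2.1] at this
    linarith
  simp only [Set.mem_setOf_eq] at hz₀P
  have hz₀0 : z₀ ≤ 0 := by
    by_contra hc'
    push_neg at hc'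
    have hout : z₀ ∉ Set.Icc L 0 := fun hm => absurd hm.2 (not_le.mpr hc')
    rw [hsupp z₀ hout] at hz₀P
    exact absurd hz₀P (by simp)
  obtain ⟨B, hB⟩ : ∃ B : ℕ → ℝ, B = fun j : ℕ => (1-γ)*((j:ℝ)*(2-((j:ℝ)+1)*μ)/2) - (j:ℝ)*μ*ε :=
    ⟨_, rfl⟩
  have hBj : ∀ n : ℕ, B n = (1-γ)*((n:ℝ)*(2-((n:ℝ)+1)*μ)/2) - (n:ℝ)*μ*ε := by
    intro n; rw [hB]
  have main : ∀ j : ℕ, (j:ℝ) ≤ k → (0 ≤ B j ∧ ((B j:ℝ):EReal) ≤ g (z₀ - j*v)) := by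
    intro j
    induction j with
    | zero =>
      intro _
      have h0 : B 0 = 0 := by rw [hBj]; norm_num
      constructor
      · rw [h0]
      · rw [h0]
        norm_num
        exact le_of_lt hz₀P
    | succ j ih =>
      intro hjk
      have hj1 : ((j:ℝ)+1) ≤ k := by exact_mod_cast hjk
      have hjk' : (j:ℝ) ≤ k := by linarith
      obtain ⟨ihB, ihg⟩ := ih hjk'
      have hjnn : (0:ℝ) ≤ (j:ℝ) := Nat.cast_nonneg j
      have hBsucc : B (j+1) = B j + (1-γ)*(1-((j:ℝ)+1)*μ) - μ*ε := by
        rw [hBj, hBj]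
        push_cast
        ring
      have side1 : 0 ≤ B (j+1) := by
        have e1 : B (j+1) = (1-γ)*(((j:ℝ)+1)*(2-((j:ℝ)+2)*μ)/2) - ((j:ℝ)+1)*μ*ε := by
          rw [hBj]
          push_cast
          ring
        have e2 : 2-((j:ℝ)+2)*μ ≥ 2 - (k+1)*μ := by nlinarith
        have p1 : ((j:ℝ))*(2-((j:ℝ)+2)*μ) ≥ (j:ℝ)*(2 - (k+1)*μ) :=
          mul_le_mul_of_nonneg_left e2 hjnn
        have p2 : (0:ℝ) ≤ (j:ℝ)*(2 - (k+1)*μ) := mul_nonneg hjnn (le_of_lt h2kμ)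
        have p3 : ((j:ℝ)+1)*(2-((j:ℝ)+2)*μ) ≥ (2 - (k+1)*μ) := by linarith
        have e3 : (1-γ)*(((j:ℝ)+1)*(2-((j:ℝ)+2)*μ)/2) ≥ D := by
          rw [hD]
          have := mul_le_mul_of_nonneg_left p3 (le_of_lt h1γ)
          linarith
        have e4 : ((j:ℝ)+1)*μ*ε ≤ k*μ*ε := by
          have := mul_le_mul_of_nonneg_right hj1 (mul_nonneg (le_of_lt hμ) (le_of_lt hεpos))
          nlinarith
        rw [e1]
        rw [hkμε] at e4
        have := min_le_left D ρ
        linarith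
      refine ⟨side1, ?_⟩
      have hstep : ((1 - γ + B j - μ*(((j:ℝ)+1)*v + ε) : ℝ):EReal)
          ≤ Phi γ μ g (sNext γ μ g) (z₀ - j*v) := by
        apply Phi_ge
        · exact le_trans ihg (le_hfun g (z₀ - j*v))
        · have hjv : 0 ≤ ((j:ℝ)+1)*v := mul_nonneg (by linarith) (le_of_lt hvpos)
          have hmax : max (sNext γ μ g - (z₀ - j*v)) 0 ≤ ((j:ℝ)+1)*v + ε := by
            apply max_le
            · have : sNext γ μ g - (z₀ - (j:ℝ)*v) = (sNext γ μ g - z₀) + (j:ℝ)*v := by ring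
              rw [this]
              have h1 : sNext γ μ g - z₀ ≤ v + ε := by linarith
              linarith [h1]
            · linarith
          exact mul_le_mul_of_nonneg_left hmax (le_of_lt hμ)
      have hBB : B (j+1) ≤ 1 - γ + B j - μ*(((j:ℝ)+1)*v + ε) := by
        have q1 : (0:ℝ) ≤ μ*((j:ℝ)+1) := mul_nonneg (le_of_lt hμ) (by linarith)
        have q2 : μ*((j:ℝ)+1)*v ≤ μ*((j:ℝ)+1)*(1-γ) := mul_le_mul_of_nonneg_left hvle q1
        rw [hBsucc]
        nlinarith [q2]
      have hchain : ((B (j+1):ℝ):EReal) ≤ Phi γ μ g (sNext γ μ g) (z₀ - j*v) :=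
        le_trans (by exact_mod_cast hBB) hstep
      have hfin := piE_ge_of_le side1 hchain
      rw [wave_one hg (z₀ - j*v)] at hfin
      have heq : z₀ - (j:ℝ)*v - v = z₀ - ((j+1:ℕ):ℝ)*v := by push_cast; ring
      rw [heq] at hfin
      exact hfin
  -- conclusion
  have hknn : (0:ℤ) ≤ kFl μ := by
    have : (1:ℝ) ≤ ((kFl μ : ℤ):ℝ) := by rw [← hkdef]; exact hk1
    exact_mod_cast le_trans zero_le_one this
  have hknat : (((kFl μ).toNat : ℕ):ℝ) = k := by
    rw [hkdef]
    exact_mod_cast congrArg (Int.cast : ℤ → ℝ) (Int.toNat_of_nonneg hknn)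
  obtain ⟨_, hfin⟩ := main (kFl μ).toNat (le_of_eq hknat)
  have hle := le_trans hfin (g_le_gamma hg hF _)
  rw [EReal.coe_le_coe_iff] at hle
  have hBK : B (kFl μ).toNat = (1-γ)*A - k*μ*ε := by
    rw [hBj, hknat, hA]
  rw [hBK, hkμε] at hle
  have hmr := min_le_right D ρ
  linarith [hρpos, hρ.le, hρ.ge]

end Main

/-- selection of the luckiest vs. selection of the fittest. If
`γ < γ_c`, the reproduction profile strictly dominates `g₁ = g(· − v)` on the
support of `g₁`; if `γ > γ_c`, they agree on `[s, v]`. -/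
theorem reproduction_vs_selection (γ μ : ℝ) (hγ : γ ∈ Set.Ioo (0 : ℝ) 1)
    (hμ : 0 < μ) (hμ1 : μ ≠ 1)
    (g : ℝ → EReal) (v L : ℝ) (hg : IsTravelingWave γ μ g v L) :
    (γ < gammaC μ → ∀ x : ℝ, 0 ≤ g (x - v) → g (x - v) < reprofile γ g x) ∧
    (gammaC μ < γ → ∀ x ∈ Set.Icc (sNext γ μ g) v, reprofile γ g x = g (x - v)) := by
  constructor
  · intro hlt x h0
    have hw := wave_one hg x
    have hnn : (0:EReal) ≤ Phi γ μ g (sNext γ μ g) x := nonneg_of_piE (by rw [hw]; exact h0)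
    have hval : g (x - v) = Phi γ μ g (sNext γ μ g) x := by
      rw [← hw, piE_of_nonneg hnn]
    have hsupp := hg.2.2.2.2.2.1
    -- x is strictly left of the threshold
    have hxs : x < sNext γ μ g := by
      by_contra hxs
      push_neg at hxs
      have hIcc : x - v ∈ Set.Icc L 0 := by
        by_contra hcc
        rw [hsupp _ hcc] at h0
        exact absurd h0 (by simp)
      have hxv : x ≤ v := by linarith [hIcc.2]
      have := fittest_implies hγ hμ hμ1 hg (le_trans hxs hxv)
      linarith
    -- the sup-convolution part is finite
    obtain ⟨hCt, hCb⟩ := C_facts hγ hg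
    obtain ⟨c, hCc⟩ : ∃ c : ℝ, (⨆ y : ℝ, g y + ((y:ℝ):EReal)) = ((c:ℝ):EReal) :=
      ⟨_, (EReal.coe_toReal hCt hCb).symm⟩
    have hc : ∀ y : ℝ, g y + ((y:ℝ):EReal) ≤ ((c:ℝ):EReal) := by
      intro y
      rw [← hCc]
      exact le_iSup (fun y : ℝ => g y + ((y:ℝ):EReal)) y
    set R := ((1 - γ : ℝ) : EReal) + (⨆ y : ℝ, g y - ((|x - y| : ℝ) : EReal)) with hR
    have hPhiR : Phi γ μ g (sNext γ μ g) x = R - ((μ * max (sNext γ μ g - x) 0 : ℝ):EReal) := rfl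
    have hRnn : (0:EReal) ≤ R := by
      refine le_trans hnn ?_
      rw [hPhiR]
      calc R - ((μ * max (sNext γ μ g - x) 0 : ℝ):EReal) ≤ R - ((0:ℝ):EReal) :=
            sub_coe_mono (mul_nonneg (le_of_lt hμ) (le_max_right _ _))
        _ = R := by simp
    have hRtop : R ≠ ⊤ := by
      intro htop
      have : R ≤ ((1 - γ + (c - L) : ℝ):EReal) := by
        rw [hR]
        calc ((1 - γ : ℝ) : EReal) + (⨆ y : ℝ, g y - ((|x - y| : ℝ) : EReal))
            ≤ ((1 - γ : ℝ) : EReal) + ((c - L:ℝ):EReal) :=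
              add_le_add_right (hfun_le_two hc hsupp x) _
          _ = ((1 - γ + (c - L) : ℝ):EReal) := by norm_cast
      rw [htop, top_le_iff] at this
      exact EReal.coe_ne_top _ this
    have hRbot : R ≠ ⊥ := by
      intro hbot
      rw [hbot] at hRnn
      exact absurd hRnn (by simp)
    obtain ⟨r, hr⟩ : ∃ r : ℝ, R = ((r:ℝ):EReal) := ⟨_, (EReal.coe_toReal hRtop hRbot).symm⟩
    have hpen : 0 < μ * max (sNext γ μ g - x) 0 :=
      mul_pos hμ (lt_of_lt_of_le (by linarith : (0:ℝ) < sNext γ μ g - x) (le_max_left _ _))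
    have hrpen : g (x - v) = ((r - μ * max (sNext γ μ g - x) 0 : ℝ):EReal) := by
      rw [hval, hPhiR, hr, ← EReal.coe_sub]
    have hrepro : reprofile γ g x = ((r:ℝ):EReal) := by
      rw [reprofile, ← hR, hr, piE_of_nonneg (by rw [← hr]; exact hRnn)]
    rw [hrpen, hrepro]
    exact_mod_cast (by linarith : r - μ * max (sNext γ μ g - x) 0 < r)
  · intro _ x hx
    rw [← wave_one hg x, reprofile, Phi_no_pen γ μ g hx.1]
end

section
/- Fix γ ∈ (0,1) and μ > 0. For any function g : ℝ → ℝ ∪ {−∞}, any ξ ∈ ℝ, and all x ∈ ℝ, the identity Φ_ξ[g](x) + μ·max(ξ − x, 0) = 1 − γ + sup_{y∈ℝ} ( g(y) − |x − y| ) holds; consequently, if g is a concave traveling wave with speed v and phenotypic threshold s satisfying v < s, then the function Ψ[g](x) := 1 − γ + sup_{y∈ℝ} ( g(y) − |x − y| ) satisfies Ψ[g](v) > 0, and there exists x ∈ (v, s) with π(Ψ[g](x)) > 0. -/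
/-- `Ψ[g](x) = 1 − γ + sup_y ( g(y) − |x − y| )`. -/

lemma my_add_assoc_coe (r s : ℝ) (a : EReal) :
    ((r : EReal) + a) + (s : EReal) = (r : EReal) + (a + (s : EReal)) := by
  induction a using EReal.rec with
  | bot => simp
  | coe q => norm_cast; ring
  | top => simp

lemma my_add_assoc_coe' (a : EReal) (r s : ℝ) :
    (a + (r : EReal)) + (s : EReal) = a + ((r + s : ℝ) : EReal) := by
  induction a using EReal.rec with
  | bot => simp
  | coe q => norm_cast; ring
  | top => simp

lemma my_coe_lt_of_lt_add {a : EReal} {p c : ℝ} (h : (p : EReal) < a + (c : EReal)) :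
    ((p - c : ℝ) : EReal) < a := by
  induction a using EReal.rec with
  | bot => simp at h
  | coe q => norm_cast at h ⊢; linarith
  | top => exact EReal.coe_lt_top _

lemma my_pos_of_piE_pos {t : EReal} (h : (0:EReal) < piE t) : (0:EReal) < t := by
  unfold piE at h; split at h
  · exact h
  · exact absurd h (by simp)

noncomputable def Psi (γ : ℝ) (g : ℝ → EReal) (x : ℝ) : EReal :=
  ((1 - γ : ℝ) : EReal) + ⨆ y : ℝ, g y - ((|x - y| : ℝ) : EReal)

lemma my_lip (γ : ℝ) (g : ℝ → EReal) (x v : ℝ) :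
    Psi γ g x ≤ Psi γ g v + ((|x - v| : ℝ) : EReal) := by
  unfold Psi
  rw [my_add_assoc_coe]
  refine add_le_add_right ?_ _
  refine iSup_le fun y => ?_
  have key : g y - ((|x - y| : ℝ) : EReal)
      ≤ (g y - ((|v - y| : ℝ) : EReal)) + ((|x - v| : ℝ) : EReal) := by
    have h1 : (g y - ((|v - y| : ℝ) : EReal)) + ((|x - v| : ℝ) : EReal)
        = g y + (((-|v - y| + |x - v| : ℝ)) : EReal) := by
      rw [sub_eq_add_neg, ← EReal.coe_neg, my_add_assoc_coe']
    rw [h1, sub_eq_add_neg, ← EReal.coe_neg]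
    refine add_le_add_right (EReal.coe_le_coe_iff.2 ?_) _
    have : |v - y| ≤ |v - x| + |x - y| := abs_sub_le v x y
    have h2 : |v - x| = |x - v| := abs_sub_comm v x
    linarith
  exact key.trans (add_le_add_left (le_iSup (fun y => g y - ((|v - y| : ℝ) : EReal)) y) _)

/-- the identity `Φ_ξ[g](x) + μ·max(ξ − x, 0) = Ψ[g](x)` holds
for all `g`, `ξ`, `x`; consequently, for a concave traveling wave `g` with
speed `v` and phenotypic threshold `s = sNext γ μ g` satisfying `v < s`, one
has `Ψ[g](v) > 0` and there is `x ∈ (v, s)` with `π(Ψ[g](x)) > 0`. -/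
theorem Psi_identity_and_positivity (γ μ : ℝ) (hγ : γ ∈ Set.Ioo (0 : ℝ) 1)
    (hμ : 0 < μ) :
    (∀ (g : ℝ → EReal) (ξ x : ℝ),
      Phi γ μ g ξ x + ((μ * max (ξ - x) 0 : ℝ) : EReal) = Psi γ g x) ∧
    (∀ (g : ℝ → EReal) (v L : ℝ), IsTravelingWave γ μ g v L →
      v < sNext γ μ g →
        (0 : EReal) < Psi γ g v ∧
        ∃ x ∈ Set.Ioo v (sNext γ μ g), (0 : EReal) < piE (Psi γ g x)) := by
  have hid : ∀ (g : ℝ → EReal) (ξ x : ℝ),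
      Phi γ μ g ξ x + ((μ * max (ξ - x) 0 : ℝ) : EReal) = Psi γ g x := by
    intro g ξ x
    unfold Phi Psi
    exact EReal.sub_add_cancel
  refine ⟨hid, ?_⟩
  intro g v L htw hvs
  obtain ⟨hconc, hne, hbb, hsup, hinf, hout, hshift⟩ := htw
  set s := sNext γ μ g with hs
  set δ := μ * (s - v) with hδ
  have hδpos : 0 < δ := mul_pos hμ (by linarith)
  have hsub : {x : ℝ | 0 < g x} ⊆ Set.Icc L 0 := by
    intro x hx
    by_contra hxx
    rw [Set.mem_setOf_eq, hout x hxx] at hx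
    exact absurd hx (by simp)
  obtain ⟨y0, hy0mem, hy0gt⟩ := exists_lt_of_lt_csSup hne
    (show -(δ/2) < sSup {x : ℝ | 0 < g x} by rw [hsup]; linarith)
  have hy0le : y0 ≤ 0 := (hsub hy0mem).2
  set x0 := v + y0 with hx0
  have h1 : gIter γ μ g 1 x0 = g (x0 - (1:ℕ) * v) := hshift 1 le_rfl x0
  have h2 : gIter γ μ g 1 x0 = piE (Phi γ μ g s x0) := rfl
  have hx0v : x0 - (1:ℕ) * v = y0 := by push_cast; ring
  have hgy0 : (0:EReal) < g y0 := hy0mem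
  have hPhipos : (0:EReal) < Phi γ μ g s x0 := by
    refine my_pos_of_piE_pos ?_
    rw [← h2, h1, hx0v]
    exact hgy0
  have hmax : max (s - x0) 0 = s - x0 := max_eq_left (by simp only [hx0]; linarith)
  have hPsix0 : ((μ * (s - x0) : ℝ) : EReal) < Psi γ g x0 := by
    rw [← hid g s x0, hmax]
    calc ((μ * (s - x0) : ℝ) : EReal) = (0:EReal) + ((μ * (s - x0) : ℝ) : EReal) :=
          (zero_add _).symm
      _ < Phi γ μ g s x0 + ((μ * (s - x0) : ℝ) : EReal) :=
          EReal.add_lt_add_right_coe hPhipos _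
  have hlx : Psi γ g x0 ≤ Psi γ g v + ((|x0 - v| : ℝ) : EReal) := my_lip γ g x0 v
  have h3 : ((μ * (s - x0) - |x0 - v| : ℝ) : EReal) < Psi γ g v :=
    my_coe_lt_of_lt_add (hPsix0.trans_le hlx)
  have habs : |x0 - v| = -y0 := by
    rw [show x0 - v = y0 by rw [hx0]; ring]
    exact abs_of_nonpos hy0le
  have hreal1 : δ/2 < μ * (s - x0) - |x0 - v| := by
    rw [habs, hx0]
    have hy0' : -(δ/2) < y0 := hy0gt
    rcases le_or_gt μ 1 with hμ1 | hμ1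
    · nlinarith
    · nlinarith
  have hPsiv : ((δ/2 : ℝ) : EReal) < Psi γ g v :=
    lt_trans (EReal.coe_lt_coe_iff.2 hreal1) h3
  have hPsivpos : (0:EReal) < Psi γ g v :=
    lt_trans (EReal.coe_pos.2 (by linarith)) hPsiv
  refine ⟨hPsivpos, ?_⟩
  set t := min (δ/4) ((s - v)/2) with ht
  have htpos : 0 < t := lt_min (by linarith) (by linarith)
  have ht1 : t ≤ δ/4 := min_le_left _ _
  have ht2 : t ≤ (s - v)/2 := min_le_right _ _
  refine ⟨v + t, ⟨by linarith, by linarith⟩, ?_⟩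
  have hl2 : Psi γ g v ≤ Psi γ g (v + t) + ((|v - (v + t)| : ℝ) : EReal) :=
    my_lip γ g v (v + t)
  have habs2 : |v - (v + t)| = t := by
    rw [show v - (v + t) = -t by ring, abs_neg, abs_of_pos htpos]
  rw [habs2] at hl2
  have h4 : ((δ/2 - t : ℝ) : EReal) < Psi γ g (v + t) :=
    my_coe_lt_of_lt_add (hPsiv.trans_le hl2)
  have h5 : (0:EReal) < Psi γ g (v + t) :=
    lt_trans (EReal.coe_pos.2 (by linarith)) h4
  unfold piE
  rw [if_pos h5.le]
  exact h5
end
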